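/- arXiv:2006.05793 — 3 statements merged into one kernel-verified Lean document; each statement's English description precedes it below -/
import Mathlib

section
/- Let (X, Y) be a correlated Brownian motion pair with dynamic correlation ρ, observed at the integer times 1, …, T. Then for each fixed integer time i ≥ 1, the variances Var(γ̂_i^{0,0}), Var((σ̂_i^{x,0,0})²) and Var((σ̂_i^{y,0,0})²) all converge to 0 as T → ∞. -/
open MeasureTheory ProbabilityTheory Filter Finset

/-- A standard Brownian motion sampled at the integer times. -/
structure IsDiscreteBM {Ω : Type*} [MeasureSpace Ω] (X : ℕ → Ω → ℝ) : Prop where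
  meas : ∀ t, Measurable (X t)
  init : ∀ᵐ ω ∂(ℙ : Measure Ω), X 0 ω = 0
  incr : ∀ s t : ℕ, s ≤ t →
    Measure.map (fun ω => X t ω - X s ω) (ℙ : Measure Ω) = gaussianReal 0 ((t - s : ℕ) : NNReal)
  indep_incr : ∀ u : ℕ → ℕ, Monotone u →
    iIndepFun
      (fun i ω => X (u (i + 1)) ω - X (u i) ω) (ℙ : Measure Ω)

/-- Independence of two processes (as functions into `ℕ → ℝ`). -/
def ProcIndep {Ω : Type*} [MeasureSpace Ω] (A B : ℕ → Ω → ℝ) : Prop :=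
  IndepFun (fun ω t => A t ω) (fun ω t => B t ω) (ℙ : Measure Ω)

/-- A correlated Brownian motion pair with dynamic correlation `ρ`. -/
structure IsCorrBMPair {Ω : Type*} [MeasureSpace Ω] (ρ : ℕ → ℝ) (X Y : ℕ → Ω → ℝ) : Prop where
  bound : ∀ t, |ρ t| ≤ 1
  bmX : IsDiscreteBM X
  bmY : IsDiscreteBM Y
  rep : ∃ X1 Y1 : ℕ → Ω → ℝ, IsDiscreteBM X1 ∧ IsDiscreteBM Y1 ∧
    ProcIndep X1 Y ∧ ProcIndep Y1 X ∧
    (∀ t, ∀ᵐ ω ∂(ℙ : Measure Ω),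
      X t ω = ρ t * Y t ω + Real.sqrt (1 - ρ t ^ 2) * X1 t ω) ∧
    (∀ t, ∀ᵐ ω ∂(ℙ : Measure Ω),
      Y t ω = ρ t * X t ω + Real.sqrt (1 - ρ t ^ 2) * Y1 t ω)

/-- The covariance estimator `γ̂_u^{q,p}`; with `Y := X` it is `(σ̂_u^{x,q,p})²`. -/
noncomputable def gammaHat {Ω : Type*} [MeasureSpace Ω] (X Y : ℕ → Ω → ℝ) (q p : ℝ)
    (T u : ℕ) (ω : Ω) : ℝ :=
  ((T : ℝ) - 1)⁻¹ * ∑ v ∈ (Finset.Icc 1 T).erase u,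
    ((v : ℝ) ^ q * X u ω - (v : ℝ) ^ (-p) * X v ω) *
      ((v : ℝ) ^ q * Y u ω - (v : ℝ) ^ (-p) * Y v ω) / ((u : ℝ) - (v : ℝ)) ^ 2

/-- The dynamic correlation estimator `ρ̂_u^{q,p}`. -/
noncomputable def rhoHat {Ω : Type*} [MeasureSpace Ω] (X Y : ℕ → Ω → ℝ) (q p : ℝ)
    (T u : ℕ) (ω : Ω) : ℝ :=
  gammaHat X Y q p T u ω /
    (Real.sqrt (gammaHat X X q p T u ω) * Real.sqrt (gammaHat Y Y q p T u ω))

/-! ### Auxiliary lemmas -/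

section Aux

open scoped ENNReal NNReal

lemma integrable_pow_gaussianReal (v : NNReal) (m : ℕ) :
    Integrable (fun x : ℝ => x ^ m) (gaussianReal 0 v) := by
  by_cases hv : v = 0
  · subst hv; rw [gaussianReal_zero_var]
    refine ⟨(measurable_id.pow_const m).aestronglyMeasurable, ?_⟩
    rw [HasFiniteIntegral, lintegral_dirac]
    exact ENNReal.coe_lt_top
  · rw [gaussianReal_of_var_ne_zero _ hv]
    rw [integrable_withDensity_iff (measurable_gaussianPDF _ _)
      (Filter.Eventually.of_forall fun x => ENNReal.ofReal_lt_top)]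
    have hv0 : (0:ℝ) < v := lt_of_le_of_ne (NNReal.coe_nonneg v) (by exact_mod_cast (Ne.symm hv))
    have h2v : (0:ℝ) < (2 * (v:ℝ))⁻¹ := by positivity
    have := (integrable_rpow_mul_exp_neg_mul_sq h2v (s := (m:ℝ))
      (by exact_mod_cast neg_one_lt_zero.trans_le (Nat.cast_nonneg m))).const_mul
      ((Real.sqrt (2 * Real.pi * v))⁻¹)
    refine this.congr ?_
    refine Filter.Eventually.of_forall fun x => ?_
    simp only [gaussianPDF, gaussianPDFReal, Real.rpow_natCast, sub_zero]
    ring_nf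
    rw [ENNReal.toReal_ofReal (by positivity)]
    ring

lemma gaussianReal_eq_map (v : NNReal) :
    gaussianReal 0 v = Measure.map (fun x => Real.sqrt v * x) (gaussianReal 0 1) := by
  rw [gaussianReal_map_const_mul]
  congr
  · ring
  · ext
    simp [Real.sq_sqrt (NNReal.coe_nonneg v)]

lemma integral_pow_gaussianReal (v : NNReal) (m : ℕ) :
    ∫ x, x ^ m ∂(gaussianReal 0 v) = (Real.sqrt v) ^ m * ∫ x, x ^ m ∂(gaussianReal 0 1) := by
  rw [gaussianReal_eq_map v, integral_map (f := fun x : ℝ => x ^ m)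
    (measurable_const_mul _).aemeasurable (by fun_prop)]
  simp_rw [mul_pow, integral_const_mul]

lemma moment_of_map {Ω : Type*} [MeasureSpace Ω] {W : Ω → ℝ} {v : NNReal}
    (hW : Measure.map W (ℙ : Measure Ω) = gaussianReal 0 v) (hWm : Measurable W) (m : ℕ) :
    Integrable (fun ω => (W ω) ^ m) (ℙ : Measure Ω) ∧
      ∫ ω, (W ω) ^ m ∂(ℙ : Measure Ω)
        = (Real.sqrt v) ^ m * ∫ x, x ^ m ∂(gaussianReal 0 1) := by
  have hg : AEStronglyMeasurable (fun x : ℝ => x ^ m) (Measure.map W ℙ) :=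
    (measurable_id.pow_const m).aestronglyMeasurable
  constructor
  · have h := (integrable_map_measure hg hWm.aemeasurable).mp
      (by rw [hW]; exact integrable_pow_gaussianReal v m)
    exact h
  · rw [← integral_pow_gaussianReal v m, ← hW,
      integral_map (f := fun x : ℝ => x ^ m) hWm.aemeasurable hg]

lemma incr_moments {Ω : Type*} [MeasureSpace Ω] {A : ℕ → Ω → ℝ} (hA : IsDiscreteBM A)
    {i v : ℕ} (hvi : v ≠ i) :
    (Integrable (fun ω => (A i ω - A v ω) ^ 2) (ℙ : Measure Ω) ∧
      ∫ ω, (A i ω - A v ω) ^ 2 ∂(ℙ : Measure Ω)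
        = |(i:ℝ) - v| * ∫ x, x ^ 2 ∂(gaussianReal 0 1)) ∧
    (Integrable (fun ω => (A i ω - A v ω) ^ 4) (ℙ : Measure Ω) ∧
      ∫ ω, (A i ω - A v ω) ^ 4 ∂(ℙ : Measure Ω)
        = (|(i:ℝ) - v|) ^ 2 * ∫ x, x ^ 4 ∂(gaussianReal 0 1)) := by
  have key : ∀ s t : ℕ, s < t → ∀ m : ℕ,
      Integrable (fun ω => (A t ω - A s ω) ^ m) (ℙ : Measure Ω) ∧
      ∫ ω, (A t ω - A s ω) ^ m ∂(ℙ : Measure Ω)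
        = (Real.sqrt ((t : ℝ) - s)) ^ m * ∫ x, x ^ m ∂(gaussianReal 0 1) := by
    intro s t hst m
    have h := moment_of_map (hA.incr s t hst.le) ((hA.meas t).sub (hA.meas s)) m
    have hcast : ((((t - s : ℕ) : NNReal)) : ℝ) = (t : ℝ) - s := by
      rw [NNReal.coe_natCast, Nat.cast_sub hst.le]
    rw [hcast] at h
    exact h
  rcases lt_or_gt_of_ne hvi with hlt | hgt
  · have h2 := key v i hlt 2
    have h4 := key v i hlt 4
    have hd : |(i:ℝ) - v| = (i:ℝ) - v := abs_of_nonneg (by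
      have : (v:ℝ) ≤ i := by exact_mod_cast hlt.le
      linarith)
    have hnn : (0:ℝ) ≤ (i:ℝ) - v := by
      have : (v:ℝ) ≤ i := by exact_mod_cast hlt.le
      linarith
    have hsq : (Real.sqrt ((i:ℝ) - v)) ^ 2 = (i:ℝ) - v := Real.sq_sqrt hnn
    have hsq4 : (Real.sqrt ((i:ℝ) - v)) ^ 4 = ((i:ℝ) - v) ^ 2 := by
      rw [show (4:ℕ) = 2 * 2 from rfl, pow_mul, hsq]
    refine ⟨⟨h2.1, ?_⟩, ⟨h4.1, ?_⟩⟩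
    · rw [h2.2, hsq, hd]
    · rw [h4.2, hsq4, hd]
  · have h2 := key i v hgt 2
    have h4 := key i v hgt 4
    have heq2 : ∀ ω, (A i ω - A v ω) ^ 2 = (A v ω - A i ω) ^ 2 := fun ω => by ring
    have heq4 : ∀ ω, (A i ω - A v ω) ^ 4 = (A v ω - A i ω) ^ 4 := fun ω => by ring
    have hd : |(i:ℝ) - v| = (v:ℝ) - i := by
      rw [abs_sub_comm]
      refine abs_of_nonneg ?_
      have : (i:ℝ) ≤ v := by exact_mod_cast hgt.le
      linarith
    have hnn : (0:ℝ) ≤ (v:ℝ) - i := by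
      have : (i:ℝ) ≤ v := by exact_mod_cast hgt.le
      linarith
    have hsq : (Real.sqrt ((v:ℝ) - i)) ^ 2 = (v:ℝ) - i := Real.sq_sqrt hnn
    have hsq4 : (Real.sqrt ((v:ℝ) - i)) ^ 4 = ((v:ℝ) - i) ^ 2 := by
      rw [show (4:ℕ) = 2 * 2 from rfl, pow_mul, hsq]
    refine ⟨⟨?_, ?_⟩, ⟨?_, ?_⟩⟩
    · simpa only [heq2] using h2.1
    · simp only [heq2]; rw [h2.2, hsq, hd]
    · simpa only [heq4] using h4.1
    · simp only [heq4]; rw [h4.2, hsq4, hd]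

lemma abs_cast_sub_ge_one {i v : ℕ} (hvi : v ≠ i) : (1:ℝ) ≤ |(i:ℝ) - v| := by
  rcases lt_or_gt_of_ne hvi with hlt | hgt
  · rw [abs_of_nonneg (by
      have : (v:ℝ) ≤ i := by exact_mod_cast hlt.le
      linarith)]
    have : (v:ℝ) + 1 ≤ i := by exact_mod_cast hlt
    linarith
  · rw [abs_sub_comm, abs_of_nonneg (by
      have : (i:ℝ) ≤ v := by exact_mod_cast hgt.le
      linarith)]
    have : (i:ℝ) + 1 ≤ v := by exact_mod_cast hgt
    linarith

lemma aux_abs_mul (a b : ℝ) : |a * b| ≤ (a ^ 2 + b ^ 2) / 2 := by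
  rw [abs_mul]
  have h := two_mul_le_add_sq |a| |b|
  rw [sq_abs, sq_abs] at h
  linarith

lemma aux_sq_mul (a b : ℝ) : (a * b) ^ 2 ≤ (a ^ 4 + b ^ 4) / 2 := by
  nlinarith [sq_nonneg (a ^ 2 - b ^ 2), sq_nonneg (a * b)]

end Aux
section Aux2
open scoped ENNReal NNReal
lemma perv {Ω : Type*} [MeasureSpace Ω] {A B : ℕ → Ω → ℝ}
    (hA : IsDiscreteBM A) (hB : IsDiscreteBM B) {i v : ℕ} (hvi : v ≠ i) :
    MemLp (fun ω => (A i ω - A v ω) * (B i ω - B v ω) / ((i:ℝ) - v) ^ 2) 2 (ℙ : Measure Ω) ∧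
    |∫ ω, (A i ω - A v ω) * (B i ω - B v ω) / ((i:ℝ) - v) ^ 2 ∂(ℙ : Measure Ω)|
      ≤ (∫ x, x ^ 2 ∂(gaussianReal 0 1)) / |(i:ℝ) - v| ∧
    ∫ ω, ((A i ω - A v ω) * (B i ω - B v ω) / ((i:ℝ) - v) ^ 2) ^ 2 ∂(ℙ : Measure Ω)
      ≤ (∫ x, x ^ 4 ∂(gaussianReal 0 1)) / ((i:ℝ) - v) ^ 2 := by
  set C2 := ∫ x, x ^ 2 ∂(gaussianReal 0 1) with hC2
  set C4 := ∫ x, x ^ 4 ∂(gaussianReal 0 1) with hC4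
  set W := fun ω => A i ω - A v ω with hWdef
  set U := fun ω => B i ω - B v ω with hUdef
  set d := |(i:ℝ) - v| with hddef
  have hd1 : (1:ℝ) ≤ d := abs_cast_sub_ge_one hvi
  have hd0 : (0:ℝ) < d := lt_of_lt_of_le one_pos hd1
  have he : ((i:ℝ) - v) ^ 2 = d ^ 2 := (sq_abs _).symm
  have hWm : Measurable W := (hA.meas i).sub (hA.meas v)
  have hUm : Measurable U := (hB.meas i).sub (hB.meas v)
  obtain ⟨⟨hW2, hW2i⟩, ⟨hW4, hW4i⟩⟩ := incr_moments hA hvi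
  obtain ⟨⟨hU2, hU2i⟩, ⟨hU4, hU4i⟩⟩ := incr_moments hB hvi
  -- pointwise bounds
  have habs : ∀ ω, |W ω * U ω| ≤ (W ω ^ 2 + U ω ^ 2) / 2 := fun ω => aux_abs_mul _ _
  have hsqb : ∀ ω, (W ω * U ω) ^ 2 ≤ (W ω ^ 4 + U ω ^ 4) / 2 := fun ω => aux_sq_mul _ _
  -- integrability
  have hGint : Integrable (fun ω => (W ω ^ 2 + U ω ^ 2) / 2) (ℙ : Measure Ω) :=
    (hW2.add hU2).div_const 2
  have hG4int : Integrable (fun ω => (W ω ^ 4 + U ω ^ 4) / 2) (ℙ : Measure Ω) :=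
    (hW4.add hU4).div_const 2
  have hWU : Integrable (fun ω => W ω * U ω) (ℙ : Measure Ω) := by
    refine Integrable.mono hGint (hWm.mul hUm).aestronglyMeasurable ?_
    refine Filter.Eventually.of_forall fun ω => ?_
    rw [Real.norm_eq_abs, Real.norm_eq_abs,
      abs_of_nonneg (show (0:ℝ) ≤ (W ω ^ 2 + U ω ^ 2) / 2 by positivity)]
    exact habs ω
  have hWUsq : Integrable (fun ω => (W ω * U ω) ^ 2) (ℙ : Measure Ω) := by
    refine Integrable.mono hG4int
      ((hWm.mul hUm).pow_const 2).aestronglyMeasurable ?_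
    refine Filter.Eventually.of_forall fun ω => ?_
    rw [Real.norm_eq_abs, Real.norm_eq_abs,
      abs_of_nonneg (show (0:ℝ) ≤ (W ω * U ω) ^ 2 from sq_nonneg _),
      abs_of_nonneg (show (0:ℝ) ≤ (W ω ^ 4 + U ω ^ 4) / 2 by positivity)]
    exact hsqb ω
  have habsint : Integrable (fun ω => |W ω * U ω|) (ℙ : Measure Ω) := hWU.abs
  -- integral bounds
  have hC2nn : 0 ≤ C2 := integral_nonneg fun x => by positivity
  have hC4nn : 0 ≤ C4 := integral_nonneg fun x => by positivity
  have hIabs : ∫ ω, |W ω * U ω| ∂(ℙ : Measure Ω) ≤ d * C2 := by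
    have := integral_mono habsint hGint (fun ω => habs ω)
    rw [integral_div, integral_add hW2 hU2, hW2i, hU2i] at this
    calc ∫ ω, |W ω * U ω| ∂(ℙ : Measure Ω) ≤ (d * C2 + d * C2) / 2 := this
    _ = d * C2 := by ring
  have hIsq : ∫ ω, (W ω * U ω) ^ 2 ∂(ℙ : Measure Ω) ≤ d ^ 2 * C4 := by
    have := integral_mono hWUsq hG4int (fun ω => hsqb ω)
    rw [integral_div, integral_add hW4 hU4, hW4i, hU4i] at this
    calc ∫ ω, (W ω * U ω) ^ 2 ∂(ℙ : Measure Ω) ≤ (d ^ 2 * C4 + d ^ 2 * C4) / 2 := this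
    _ = d ^ 2 * C4 := by ring
  -- the function
  have hfm : AEStronglyMeasurable (fun ω => W ω * U ω / ((i:ℝ) - v) ^ 2) (ℙ : Measure Ω) :=
    ((hWm.mul hUm).div_const _).aestronglyMeasurable
  have hfsq : Integrable (fun ω => (W ω * U ω / ((i:ℝ) - v) ^ 2) ^ 2) (ℙ : Measure Ω) := by
    have hps : (fun ω => (W ω * U ω / ((i:ℝ) - v) ^ 2) ^ 2)
        = fun ω => (W ω * U ω) ^ 2 / (((i:ℝ) - v) ^ 2) ^ 2 := by
      funext ω; rw [div_pow]
    rw [hps]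
    exact hWUsq.div_const _
  refine ⟨(memLp_two_iff_integrable_sq hfm).mpr hfsq, ?_, ?_⟩
  · show |∫ ω, W ω * U ω / ((i:ℝ) - v) ^ 2 ∂(ℙ : Measure Ω)| ≤ C2 / d
    have hid : ∫ ω, W ω * U ω / ((i:ℝ) - v) ^ 2 ∂(ℙ : Measure Ω)
        = (∫ ω, W ω * U ω ∂(ℙ : Measure Ω)) / ((i:ℝ) - v) ^ 2 := integral_div _ _
    rw [hid, abs_div, abs_of_nonneg (show (0:ℝ) ≤ ((i:ℝ) - v) ^ 2 from sq_nonneg _), he,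
      div_le_div_iff₀ (by positivity) hd0]
    have h1 : |∫ ω, W ω * U ω ∂(ℙ : Measure Ω)| ≤ d * C2 := by
      have h2 := norm_integral_le_integral_norm (μ := (ℙ : Measure Ω)) (fun ω => W ω * U ω)
      simp only [Real.norm_eq_abs] at h2
      exact h2.trans hIabs
    nlinarith [mul_le_mul_of_nonneg_right h1 hd0.le]
  · show (∫ ω, (W ω * U ω / ((i:ℝ) - v) ^ 2) ^ 2 ∂(ℙ : Measure Ω)) ≤ C4 / ((i:ℝ) - v) ^ 2
    have hps : (fun ω => (W ω * U ω / ((i:ℝ) - v) ^ 2) ^ 2)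
        = fun ω => (W ω * U ω) ^ 2 / (((i:ℝ) - v) ^ 2) ^ 2 := by
      funext ω; rw [div_pow]
    rw [hps]
    have hid : ∫ ω, (W ω * U ω) ^ 2 / (((i:ℝ) - v) ^ 2) ^ 2 ∂(ℙ : Measure Ω)
        = (∫ ω, (W ω * U ω) ^ 2 ∂(ℙ : Measure Ω)) / (((i:ℝ) - v) ^ 2) ^ 2 := integral_div _ _
    rw [hid, he, div_le_div_iff₀ (show (0:ℝ) < (d ^ 2) ^ 2 by positivity)
      (show (0:ℝ) < d ^ 2 by positivity)]
    nlinarith [mul_le_mul_of_nonneg_right hIsq (sq_nonneg d)]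
lemma evariance_eq_pow {Ω : Type*} [MeasurableSpace Ω] (X : Ω → ℝ) (μ : Measure Ω) :
    evariance X μ = eLpNorm (fun ω => X ω - μ[X]) 2 μ ^ 2 := by
  rw [eLpNorm_eq_lintegral_rpow_enorm_toReal two_ne_zero ENNReal.ofNat_ne_top]
  rw [← ENNReal.rpow_natCast _ 2, ← ENNReal.rpow_mul]
  simp only [ENNReal.toReal_ofNat, Nat.cast_ofNat]
  rw [show (1 / 2 : ℝ) * 2 = 1 by norm_num, ENNReal.rpow_one]
  rw [evariance]
  congr 1
  funext ω
  rw [← ENNReal.rpow_natCast]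
  norm_num

lemma eLpNorm_two_le {Ω : Type*} [MeasurableSpace Ω] {μ : Measure Ω} {f : Ω → ℝ}
    (hfi : Integrable (fun ω => f ω ^ 2) μ) {r : ℝ} (hr : ∫ ω, f ω ^ 2 ∂μ ≤ r) :
    eLpNorm f 2 μ ≤ ENNReal.ofReal (Real.sqrt r) := by
  have hr0 : 0 ≤ r := le_trans (integral_nonneg fun ω => sq_nonneg _) hr
  rw [eLpNorm_eq_lintegral_rpow_enorm_toReal two_ne_zero ENNReal.ofNat_ne_top]
  simp only [ENNReal.toReal_ofNat]
  have hpt : ∀ ω, (‖f ω‖ₑ) ^ (2:ℝ) = ENNReal.ofReal (f ω ^ 2) := by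
    intro ω
    rw [Real.enorm_eq_ofReal_abs, ENNReal.ofReal_rpow_of_nonneg (abs_nonneg _) (by norm_num)]
    congr 1
    rw [show (2:ℝ) = ((2:ℕ):ℝ) by norm_num, Real.rpow_natCast, sq_abs]
  simp_rw [hpt]
  rw [← ofReal_integral_eq_lintegral_ofReal hfi (Filter.Eventually.of_forall fun ω => sq_nonneg _)]
  calc (ENNReal.ofReal (∫ ω, f ω ^ 2 ∂μ)) ^ (1/2 : ℝ)
      ≤ (ENNReal.ofReal r) ^ (1/2 : ℝ) :=
        ENNReal.rpow_le_rpow (ENNReal.ofReal_le_ofReal hr) (by norm_num)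
    _ = ENNReal.ofReal (r ^ (1/2 : ℝ)) := ENNReal.ofReal_rpow_of_nonneg hr0 (by norm_num)
    _ = ENNReal.ofReal (Real.sqrt r) := by rw [Real.sqrt_eq_rpow]

lemma centered_bound {Ω : Type*} [MeasureSpace Ω] [IsProbabilityMeasure (ℙ : Measure Ω)]
    {f : Ω → ℝ} (hf : MemLp f 2 (ℙ : Measure Ω)) {a b : ℝ}
    (hm : |∫ ω, f ω ∂(ℙ : Measure Ω)| ≤ a) (hsq : ∫ ω, f ω ^ 2 ∂(ℙ : Measure Ω) ≤ b) :
    eLpNorm (fun ω => f ω - ∫ ω', f ω' ∂(ℙ : Measure Ω)) 2 (ℙ : Measure Ω)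
      ≤ ENNReal.ofReal (Real.sqrt b + a) := by
  set c := ∫ ω', f ω' ∂(ℙ : Measure Ω) with hc
  have ha0 : 0 ≤ a := le_trans (abs_nonneg _) hm
  have h1 : eLpNorm (fun ω => f ω - c) 2 (ℙ : Measure Ω)
      ≤ eLpNorm f 2 (ℙ : Measure Ω) + eLpNorm (fun _ : Ω => -c) 2 (ℙ : Measure Ω) := by
    have := eLpNorm_add_le (μ := (ℙ : Measure Ω)) (p := 2) hf.1
      (aestronglyMeasurable_const (b := -c)) one_le_two
    simp only [sub_eq_add_neg]; exact this
  have h2 : eLpNorm (fun _ : Ω => -c) 2 (ℙ : Measure Ω) = ENNReal.ofReal |c| := by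
    rw [eLpNorm_const _ two_ne_zero (NeZero.ne' _).symm]
    simp [Real.enorm_eq_ofReal_abs]
  have h3 : eLpNorm f 2 (ℙ : Measure Ω) ≤ ENNReal.ofReal (Real.sqrt b) :=
    eLpNorm_two_le hf.integrable_sq hsq
  calc eLpNorm (fun ω => f ω - c) 2 (ℙ : Measure Ω)
      ≤ ENNReal.ofReal (Real.sqrt b) + ENNReal.ofReal |c| := by
        exact le_trans h1 (add_le_add h3 (le_of_eq h2))
    _ ≤ ENNReal.ofReal (Real.sqrt b) + ENNReal.ofReal a :=
        add_le_add le_rfl (ENNReal.ofReal_le_ofReal hm)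
    _ = ENNReal.ofReal (Real.sqrt b + a) :=
        (ENNReal.ofReal_add (Real.sqrt_nonneg _) ha0).symm

lemma variance_sum_le {Ω : Type*} [MeasureSpace Ω] [IsProbabilityMeasure (ℙ : Measure Ω)]
    {ι : Type*} (s : Finset ι) (f : ι → Ω → ℝ)
    (hf : ∀ v ∈ s, MemLp (f v) 2 (ℙ : Measure Ω)) (K : ι → ℝ)
    (hK : ∀ v ∈ s, eLpNorm (fun ω => f v ω - ∫ ω', f v ω' ∂(ℙ : Measure Ω)) 2 (ℙ : Measure Ω)
      ≤ ENNReal.ofReal (K v)) (hKnn : ∀ v ∈ s, 0 ≤ K v) :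
    variance (fun ω => ∑ v ∈ s, f v ω) (ℙ : Measure Ω) ≤ (∑ v ∈ s, K v) ^ 2 := by
  set F := fun ω => ∑ v ∈ s, f v ω with hF
  have hint : ∀ v ∈ s, Integrable (f v) (ℙ : Measure Ω) := fun v hv =>
    (hf v hv).integrable one_le_two
  have hEF : ∫ ω, F ω ∂(ℙ : Measure Ω) = ∑ v ∈ s, ∫ ω, f v ω ∂(ℙ : Measure Ω) :=
    integral_finset_sum s hint
  have hcent : (fun ω => F ω - ∫ ω', F ω' ∂(ℙ : Measure Ω))
      = ∑ v ∈ s, (fun ω => f v ω - ∫ ω', f v ω' ∂(ℙ : Measure Ω)) := by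
    funext ω
    rw [Finset.sum_apply]
    rw [hEF]
    rw [Finset.sum_sub_distrib]
  have hsumnorm : eLpNorm (fun ω => F ω - ∫ ω', F ω' ∂(ℙ : Measure Ω)) 2 (ℙ : Measure Ω)
      ≤ ENNReal.ofReal (∑ v ∈ s, K v) := by
    rw [hcent]
    calc eLpNorm (∑ v ∈ s, (fun ω => f v ω - ∫ ω', f v ω' ∂(ℙ : Measure Ω))) 2 (ℙ : Measure Ω)
        ≤ ∑ v ∈ s, eLpNorm (fun ω => f v ω - ∫ ω', f v ω' ∂(ℙ : Measure Ω)) 2 (ℙ : Measure Ω) :=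
          eLpNorm_sum_le (fun v hv => (hf v hv).1.sub aestronglyMeasurable_const) one_le_two
      _ ≤ ∑ v ∈ s, ENNReal.ofReal (K v) := Finset.sum_le_sum hK
      _ = ENNReal.ofReal (∑ v ∈ s, K v) := by
          rw [ENNReal.ofReal_sum_of_nonneg hKnn]
  have hev : evariance F (ℙ : Measure Ω) ≤ ENNReal.ofReal ((∑ v ∈ s, K v) ^ 2) := by
    rw [evariance_eq_pow]
    calc eLpNorm (fun ω => F ω - (ℙ : Measure Ω)[F]) 2 (ℙ : Measure Ω) ^ 2
        ≤ ENNReal.ofReal (∑ v ∈ s, K v) ^ 2 := by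
          exact pow_le_pow_left' hsumnorm 2
      _ = ENNReal.ofReal ((∑ v ∈ s, K v) ^ 2) := by
          rw [ENNReal.ofReal_pow (Finset.sum_nonneg hKnn)]
  exact ENNReal.toReal_le_of_le_ofReal (sq_nonneg _) hev
lemma sum_inv_sq_le (n : ℕ) : ∑ k ∈ Finset.range n, (1:ℝ)/((k:ℝ)+1)^2 ≤ 2 := by
  have hle : ∀ k ∈ Finset.range n, (1:ℝ)/((k:ℝ)+1)^2
      ≤ 2/((k:ℝ)+1) - 2/(((k+1:ℕ):ℝ)+1) := by
    intro k _
    push_cast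
    rw [div_sub_div _ _ (by positivity) (by positivity : ((k:ℝ)+1+1) ≠ 0), div_le_div_iff₀
      (by positivity) (by positivity)]
    ring_nf
    nlinarith [sq_nonneg ((k:ℝ)+1)]
  calc ∑ k ∈ Finset.range n, (1:ℝ)/((k:ℝ)+1)^2
      ≤ ∑ k ∈ Finset.range n, (2/((k:ℝ)+1) - 2/(((k+1:ℕ):ℝ)+1)) := Finset.sum_le_sum hle
    _ = 2/(((0:ℕ):ℝ)+1) - 2/((n:ℝ)+1) := Finset.sum_range_sub' (fun k => 2/((k:ℝ)+1)) n
    _ ≤ 2 := by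
        have : (0:ℝ) ≤ 2/((n:ℝ)+1) := by positivity
        norm_num
        linarith

lemma dist_sq_sum_le (i T : ℕ) :
    ∑ v ∈ (Finset.Icc 1 T).erase i, (1:ℝ)/((i:ℝ)-(v:ℝ))^2 ≤ (i:ℝ) + 2 := by
  set S := (Finset.Icc 1 T).erase i with hS
  have hsplit := Finset.sum_filter_add_sum_filter_not S (fun v => v < i)
    (fun v => (1:ℝ)/((i:ℝ)-(v:ℝ))^2)
  rw [← hsplit]
  have hterm1 : ∀ v ∈ S.filter (fun v => v < i), (1:ℝ)/((i:ℝ)-(v:ℝ))^2 ≤ 1 := by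
    intro v hv
    rw [Finset.mem_filter] at hv
    have hvi : v ≠ i := Finset.ne_of_mem_erase hv.1
    have hd : (1:ℝ) ≤ |(i:ℝ) - v| := by
      rcases lt_or_gt_of_ne hvi with hlt | hgt
      · rw [abs_of_nonneg (by
          have : (v:ℝ) ≤ i := by exact_mod_cast hlt.le
          linarith)]
        have : (v:ℝ) + 1 ≤ i := by exact_mod_cast hlt
        linarith
      · rw [abs_sub_comm, abs_of_nonneg (by
          have : (i:ℝ) ≤ v := by exact_mod_cast hgt.le
          linarith)]
        have : (i:ℝ) + 1 ≤ v := by exact_mod_cast hgt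
        linarith
    rw [div_le_one (by
      have h0 : (0:ℝ) < |(i:ℝ) - v| := lt_of_lt_of_le one_pos hd
      rw [← sq_abs]
      positivity)]
    rw [← sq_abs]
    nlinarith [hd]
  have h1 : ∑ v ∈ S.filter (fun v => v < i), (1:ℝ)/((i:ℝ)-(v:ℝ))^2 ≤ (i:ℝ) := by
    calc ∑ v ∈ S.filter (fun v => v < i), (1:ℝ)/((i:ℝ)-(v:ℝ))^2
        ≤ ∑ _v ∈ S.filter (fun v => v < i), (1:ℝ) := Finset.sum_le_sum hterm1
      _ = (S.filter (fun v => v < i)).card := by rw [Finset.sum_const, nsmul_eq_mul, mul_one]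
      _ ≤ (i:ℝ) := by
          have hsub : S.filter (fun v => v < i) ⊆ Finset.range i := by
            intro v hv
            rw [Finset.mem_filter] at hv
            exact Finset.mem_range.mpr hv.2
          have := Finset.card_le_card hsub
          rw [Finset.card_range] at this
          exact_mod_cast this
  have h2 : ∑ v ∈ S.filter (fun v => ¬ v < i), (1:ℝ)/((i:ℝ)-(v:ℝ))^2 ≤ 2 := by
    have hsub : S.filter (fun v => ¬ v < i) ⊆ Finset.Ico (i+1) (T+1) := by
      intro v hv
      rw [Finset.mem_filter] at hv
      have hvi : v ≠ i := Finset.ne_of_mem_erase hv.1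
      have hvT : v ≤ T := (Finset.mem_Icc.mp (Finset.mem_of_mem_erase hv.1)).2
      rw [Finset.mem_Ico]
      omega
    calc ∑ v ∈ S.filter (fun v => ¬ v < i), (1:ℝ)/((i:ℝ)-(v:ℝ))^2
        ≤ ∑ v ∈ Finset.Ico (i+1) (T+1), (1:ℝ)/((i:ℝ)-(v:ℝ))^2 :=
          Finset.sum_le_sum_of_subset_of_nonneg hsub (fun v _ _ => by positivity)
      _ = ∑ k ∈ Finset.range (T+1-(i+1)), (1:ℝ)/((i:ℝ)-((i+1+k : ℕ):ℝ))^2 :=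
          Finset.sum_Ico_eq_sum_range _ _ _
      _ = ∑ k ∈ Finset.range (T+1-(i+1)), (1:ℝ)/((k:ℝ)+1)^2 := by
          refine Finset.sum_congr rfl fun k _ => ?_
          congr 1
          push_cast
          ring
      _ ≤ 2 := sum_inv_sq_le _
  linarith
lemma tendsto_T_div_sq : Tendsto (fun T : ℕ => (T:ℝ)/((T:ℝ)-1)^2) atTop (nhds 0) := by
  have h1 : Tendsto (fun x : ℝ => (x-1)⁻¹) atTop (nhds 0) :=
    tendsto_inv_atTop_zero.comp (tendsto_atTop_add_const_right _ (-1) tendsto_id)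
  have h2 : Tendsto (fun x : ℝ => (x-1)⁻¹ + (x-1)⁻¹ * (x-1)⁻¹) atTop (nhds 0) := by
    have := h1.add (h1.mul h1)
    simpa using this
  have h3 : Tendsto (fun x : ℝ => x/(x-1)^2) atTop (nhds 0) := by
    refine h2.congr' ?_
    filter_upwards [eventually_gt_atTop (1:ℝ)] with x hx
    have hne : x - 1 ≠ 0 := by linarith
    rw [eq_div_iff (pow_ne_zero 2 hne)]
    field_simp
    ring
  exact h3.comp tendsto_natCast_atTop_atTop
end Aux2

lemma gammaHat_var_tendsto {Ω : Type*} [MeasureSpace Ω] [IsProbabilityMeasure (ℙ : Measure Ω)]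
    {A B : ℕ → Ω → ℝ} (hA : IsDiscreteBM A) (hB : IsDiscreteBM B) (i : ℕ) :
    Tendsto (fun T => variance (gammaHat A B 0 0 T i) (ℙ : Measure Ω)) atTop (nhds 0) := by
  set C2 := ∫ x, x ^ 2 ∂(gaussianReal 0 1) with hC2def
  set C4 := ∫ x, x ^ 4 ∂(gaussianReal 0 1) with hC4def
  have hC2nn : 0 ≤ C2 := integral_nonneg fun x => by positivity
  have hC4nn : 0 ≤ C4 := integral_nonneg fun x => by positivity
  set K := Real.sqrt C4 + C2 with hKdef
  have hKnn : 0 ≤ K := add_nonneg (Real.sqrt_nonneg _) hC2nn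
  have key : ∀ T : ℕ, variance (gammaHat A B 0 0 T i) (ℙ : Measure Ω)
      ≤ (K ^ 2 * ((i:ℝ) + 2)) * ((T:ℝ) / ((T:ℝ) - 1) ^ 2) := by
    intro T
    set S := (Finset.Icc 1 T).erase i with hSdef
    set f : ℕ → Ω → ℝ :=
      fun v ω => (A i ω - A v ω) * (B i ω - B v ω) / ((i:ℝ) - (v:ℝ)) ^ 2 with hfdef
    have hgam : gammaHat A B 0 0 T i = fun ω => ((T:ℝ) - 1)⁻¹ * ∑ v ∈ S, f v ω := by
      funext ω
      simp only [gammaHat, Real.rpow_zero, neg_zero, one_mul, hfdef, hSdef]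
    rw [hgam, variance_const_mul]
    have hmem : ∀ v ∈ S, MemLp (f v) 2 (ℙ : Measure Ω) := fun v hv =>
      (perv hA hB (Finset.ne_of_mem_erase hv)).1
    have hKb : ∀ v ∈ S,
        eLpNorm (fun ω => f v ω - ∫ ω', f v ω' ∂(ℙ : Measure Ω)) 2 (ℙ : Measure Ω)
          ≤ ENNReal.ofReal (K * (1 / |(i:ℝ) - v|)) := by
      intro v hv
      have hvi := Finset.ne_of_mem_erase hv
      obtain ⟨h1, h2, h3⟩ := perv hA hB hvi
      have hd1 : (1:ℝ) ≤ |(i:ℝ) - v| := abs_cast_sub_ge_one hvi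
      have hd0 : (0:ℝ) < |(i:ℝ) - v| := lt_of_lt_of_le one_pos hd1
      have h3' : ∫ ω, f v ω ^ 2 ∂(ℙ : Measure Ω) ≤ C4 / |(i:ℝ) - v| ^ 2 := by
        rw [sq_abs]; exact h3
      have hcb := centered_bound h1 h2 h3'
      refine le_trans hcb (le_of_eq ?_)
      congr 1
      rw [Real.sqrt_div hC4nn, Real.sqrt_sq hd0.le]
      rw [hKdef]
      field_simp
      rfl
    have hKnn' : ∀ v ∈ S, 0 ≤ K * (1 / |(i:ℝ) - v|) := by
      intro v hv
      have := abs_cast_sub_ge_one (Finset.ne_of_mem_erase hv)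
      positivity
    have hvs := variance_sum_le S f hmem _ hKb hKnn'
    have hsum_sq : (∑ v ∈ S, K * (1 / |(i:ℝ) - v|)) ^ 2 ≤ K ^ 2 * ((T:ℝ) * ((i:ℝ) + 2)) := by
      rw [← Finset.mul_sum, mul_pow]
      refine mul_le_mul_of_nonneg_left ?_ (by positivity)
      calc (∑ v ∈ S, 1 / |(i:ℝ) - v|) ^ 2
          ≤ (S.card : ℝ) * ∑ v ∈ S, (1 / |(i:ℝ) - v|) ^ 2 := sq_sum_le_card_mul_sum_sq
        _ = (S.card : ℝ) * ∑ v ∈ S, 1 / ((i:ℝ) - v) ^ 2 := by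
            congr 1
            refine Finset.sum_congr rfl fun v hv => ?_
            rw [div_pow, one_pow, sq_abs]
        _ ≤ (T:ℝ) * ((i:ℝ) + 2) := by
            refine mul_le_mul ?_ (dist_sq_sum_le i T) ?_ (Nat.cast_nonneg T)
            · have h1 : S.card ≤ (Finset.Icc 1 T).card := Finset.card_erase_le
              have h2 : (Finset.Icc 1 T).card = T := by
                rw [Nat.card_Icc]; omega
              have : S.card ≤ T := h2 ▸ h1
              exact_mod_cast this
            · refine Finset.sum_nonneg fun v hv => by positivity
    calc ((T:ℝ) - 1)⁻¹ ^ 2 * variance (fun ω => ∑ v ∈ S, f v ω) (ℙ : Measure Ω)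
        ≤ ((T:ℝ) - 1)⁻¹ ^ 2 * (K ^ 2 * ((T:ℝ) * ((i:ℝ) + 2))) :=
          mul_le_mul_of_nonneg_left (hvs.trans hsum_sq) (sq_nonneg _)
      _ = (K ^ 2 * ((i:ℝ) + 2)) * ((T:ℝ) / ((T:ℝ) - 1) ^ 2) := by
          rw [inv_pow, div_eq_mul_inv]
          ring
  refine squeeze_zero' (Filter.Eventually.of_forall fun T => variance_nonneg _ _)
    (Filter.Eventually.of_forall key) ?_
  have := tendsto_T_div_sq.const_mul (K ^ 2 * ((i:ℝ) + 2))
  simpa using this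

theorem statement1 {Ω : Type*} [MeasureSpace Ω] [IsProbabilityMeasure (ℙ : Measure Ω)]
    (ρ : ℕ → ℝ) (X Y : ℕ → Ω → ℝ) (h : IsCorrBMPair ρ X Y)
    (i : ℕ) (hi : 1 ≤ i) :
    Tendsto (fun T => variance (gammaHat X Y 0 0 T i) (ℙ : Measure Ω)) atTop (nhds 0) ∧
    Tendsto (fun T => variance (gammaHat X X 0 0 T i) (ℙ : Measure Ω)) atTop (nhds 0) ∧
    Tendsto (fun T => variance (gammaHat Y Y 0 0 T i) (ℙ : Measure Ω)) atTop (nhds 0) :=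
  ⟨gammaHat_var_tendsto h.bmX h.bmY i, gammaHat_var_tendsto h.bmX h.bmX i,
    gammaHat_var_tendsto h.bmY h.bmY i⟩
end

section
/- Fix an integer t ≥ 1, reals p > q ≥ 1/2, and a sequence ρ : ℕ → ℝ with |ρ_s| ≤ 1 for all s. For integers T > t define N_T = t·ρ_t·Σ_{s=1, s≠t}^{T} s^{2q}/(s−t)² + Σ_{s=1, s≠t}^{T} ρ_s·s^{1−2p}/(s−t)² − 2·Σ_{s=1, s≠t}^{T} ρ_s·s^{q−p+1}/(s−t)² + 2·Σ_{s=t+1}^{T} s^{q−p}·(s·ρ_s − t·ρ_t)/(s−t)² and M_T = t·Σ_{s=1, s≠t}^{T} s^{2q}/(s−t)² + Σ_{s=1, s≠t}^{T} s^{1−2p}/(s−t)² − 2·Σ_{s=1, s≠t}^{T} s^{q−p+1}/(s−t)² + 2·Σ_{s=t+1}^{T} s^{q−p}/(s−t). Then N_T / M_T converges to ρ_t as T → ∞. -/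
open Filter Finset



private lemma aux_sq (t s : ℕ) (ht : 1 ≤ t) (hs : 1 ≤ s) (hst : s ≠ t) :
    (s:ℝ)^2 ≤ (2*(t:ℝ)+1)^2 * ((s:ℝ) - t)^2 := by
  have h1 : (1:ℝ) ≤ ((s:ℝ) - t)^2 := by
    rcases lt_or_gt_of_ne hst with h | h
    · have : (s:ℝ) + 1 ≤ t := by exact_mod_cast h
      nlinarith
    · have : (t:ℝ) + 1 ≤ s := by exact_mod_cast h
      nlinarith
  have ht' : (1:ℝ) ≤ t := by exact_mod_cast ht
  have hs' : (1:ℝ) ≤ s := by exact_mod_cast hs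
  rcases le_or_gt (s:ℝ) (2*t) with h | h
  · nlinarith
  · have h9 : (9:ℝ) ≤ (2*(t:ℝ)+1)^2 := by nlinarith
    have key : (s:ℝ)^2 ≤ 9 * ((s:ℝ) - t)^2 := by
      nlinarith [mul_pos (show (0:ℝ) < (s:ℝ)-2*t by linarith)
          (show (0:ℝ) < (s:ℝ) by linarith),
        mul_pos (show (0:ℝ) < (s:ℝ)-2*t by linarith)
          (show (0:ℝ) < (t:ℝ) by linarith)]
    nlinarith [mul_le_mul_of_nonneg_right h9 (sq_nonneg ((s:ℝ)-t))]

private lemma aux_lin (t s : ℕ) (ht : 1 ≤ t) (hst : t < s) :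
    (s:ℝ) ≤ (2*(t:ℝ)+1) * ((s:ℝ) - t) := by
  have : (t:ℝ) + 1 ≤ s := by exact_mod_cast hst
  have ht' : (1:ℝ) ≤ t := by exact_mod_cast ht
  nlinarith

private lemma aux_term (t : ℕ) (ht : 1 ≤ t) (q p : ℝ) (e : ℝ) (he : e ≤ q - p + 1)
    (s : ℕ) (hs : 1 ≤ s) (hst : s ≠ t) :
    (s:ℝ)^e / ((s:ℝ) - t)^2 ≤ (2*(t:ℝ)+1)^2 * (s:ℝ)^(q-p-1) := by
  have hx : (1:ℝ) ≤ (s:ℝ) := by exact_mod_cast hs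
  have hx0 : (0:ℝ) < (s:ℝ) := by linarith
  have hne : ((s:ℝ) - t) ≠ 0 := by
    have : (s:ℝ) ≠ (t:ℝ) := by exact_mod_cast hst
    exact sub_ne_zero.2 this
  have hden : (0:ℝ) < ((s:ℝ) - t)^2 := by positivity
  have hnum : (s:ℝ)^e ≤ (s:ℝ)^(q-p+1) := Real.rpow_le_rpow_of_exponent_le hx he
  have hsplit : (s:ℝ)^(q-p+1) = (s:ℝ)^(q-p-1) * (s:ℝ)^2 := by
    rw [← Real.rpow_natCast (s:ℝ) 2, ← Real.rpow_add hx0]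
    congr 1
    push_cast
    ring
  have hmul : (s:ℝ)^(q-p-1) * (s:ℝ)^2 ≤ (s:ℝ)^(q-p-1) * ((2*(t:ℝ)+1)^2 * ((s:ℝ)-t)^2) :=
    mul_le_mul_of_nonneg_left (aux_sq t s ht hs hst) (Real.rpow_nonneg hx0.le _)
  rw [div_le_iff₀ hden]
  calc (s:ℝ)^e ≤ (s:ℝ)^(q-p+1) := hnum
    _ = (s:ℝ)^(q-p-1) * (s:ℝ)^2 := hsplit
    _ ≤ (s:ℝ)^(q-p-1) * ((2*(t:ℝ)+1)^2 * ((s:ℝ)-t)^2) := hmul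
    _ = (2*(t:ℝ)+1)^2 * (s:ℝ)^(q-p-1) * ((s:ℝ)-t)^2 := by ring

private lemma aux_term2 (t : ℕ) (ht : 1 ≤ t) (q p : ℝ) (s : ℕ) (hst : t < s) :
    (s:ℝ)^(q-p) / ((s:ℝ) - t) ≤ (2*(t:ℝ)+1) * (s:ℝ)^(q-p-1) := by
  have hx : (1:ℝ) ≤ (s:ℝ) := by
    have : (1:ℝ) ≤ (t:ℝ) := by exact_mod_cast ht
    have : (t:ℝ) < s := by exact_mod_cast hst
    linarith
  have hx0 : (0:ℝ) < (s:ℝ) := by linarith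
  have hden : (0:ℝ) < (s:ℝ) - t := by
    have : (t:ℝ) < s := by exact_mod_cast hst
    linarith
  have hsplit : (s:ℝ)^(q-p) = (s:ℝ)^(q-p-1) * (s:ℝ) := by
    rw [← Real.rpow_add_one hx0.ne' (q-p-1)]
    congr 1
    ring
  rw [div_le_iff₀ hden, hsplit]
  calc (s:ℝ)^(q-p-1) * (s:ℝ) ≤ (s:ℝ)^(q-p-1) * ((2*(t:ℝ)+1) * ((s:ℝ)-t)) :=
        mul_le_mul_of_nonneg_left (aux_lin t s ht hst) (Real.rpow_nonneg hx0.le _)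
    _ = (2*(t:ℝ)+1) * (s:ℝ)^(q-p-1) * ((s:ℝ)-t) := by ring

private lemma aux_sumbound (q p : ℝ) (hpq : q < p) (f : ℕ → ℝ) (c : ℝ) (hc : 0 ≤ c)
    (S : Finset ℕ) (hf : ∀ s ∈ S, |f s| ≤ c * (s:ℝ)^(q-p-1)) :
    |∑ s ∈ S, f s| ≤ c * ∑' n : ℕ, (n:ℝ)^(q-p-1) := by
  have hsum : Summable (fun n : ℕ => (n:ℝ)^(q-p-1)) :=
    Real.summable_nat_rpow.2 (by linarith)
  calc |∑ s ∈ S, f s| ≤ ∑ s ∈ S, |f s| := Finset.abs_sum_le_sum_abs _ _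
    _ ≤ ∑ s ∈ S, c * (s:ℝ)^(q-p-1) := Finset.sum_le_sum hf
    _ = c * ∑ s ∈ S, (s:ℝ)^(q-p-1) := by rw [Finset.mul_sum]
    _ ≤ c * ∑' n : ℕ, (n:ℝ)^(q-p-1) := by
        refine mul_le_mul_of_nonneg_left ?_ hc
        exact Summable.sum_le_tsum S (fun i _ => Real.rpow_nonneg (Nat.cast_nonneg i) _) hsum

private lemma aux_lim (r c : ℝ) (hc : 0 < c) (A B C : ℕ → ℝ) (KB KC : ℝ)
    (hA : Tendsto A atTop atTop) (hB : ∀ T, |B T| ≤ KB) (hC : ∀ T, |C T| ≤ KC) :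
    Tendsto (fun T => (c * r * A T + B T) / (c * A T + C T)) atTop (nhds r) := by
  have hA' : ∀ᶠ T in atTop, 0 < A T := hA.eventually_gt_atTop 0
  have hB0 : Tendsto (fun T => B T / A T) atTop (nhds 0) :=
    tendsto_bdd_div_atTop_nhds_zero (Eventually.of_forall fun T => (abs_le.1 (hB T)).1)
      (Eventually.of_forall fun T => (abs_le.1 (hB T)).2) hA
  have hC0 : Tendsto (fun T => C T / A T) atTop (nhds 0) :=
    tendsto_bdd_div_atTop_nhds_zero (Eventually.of_forall fun T => (abs_le.1 (hC T)).1)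
      (Eventually.of_forall fun T => (abs_le.1 (hC T)).2) hA
  have hkey : Tendsto (fun T => (c * r + B T / A T) / (c + C T / A T)) atTop
      (nhds ((c * r + 0) / (c + 0))) :=
    (tendsto_const_nhds.add hB0).div (tendsto_const_nhds.add hC0) (by simpa using hc.ne')
  have hval : (c * r + 0) / (c + 0) = r := by field_simp; ring
  rw [hval] at hkey
  refine hkey.congr' ?_
  filter_upwards [hA'] with T hT
  have hTne : A T ≠ 0 := hT.ne'
  by_cases hy : c * A T + C T = 0
  · have h2 : c + C T / A T = 0 := by
      have : C T = -(c * A T) := by linarith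
      rw [this]
      field_simp
      ring
    rw [h2, div_zero, hy, div_zero]
  · have h1 : c * r + B T / A T = (c * r * A T + B T) / A T := by
      field_simp
    have h2 : c + C T / A T = (c * A T + C T) / A T := by
      field_simp
    rw [h1, h2, div_div_div_cancel_right₀]
    exact hTne

private lemma aux_harm : Tendsto (fun T : ℕ => ∑ s ∈ Finset.Ioc 0 T, (1:ℝ)/s) atTop atTop := by
  refine Real.tendsto_sum_range_one_div_nat_succ_atTop.congr fun T => ?_
  rw [← Finset.Icc_add_one_left_eq_Ioc, ← Finset.Ico_add_one_right_eq_Icc, Finset.sum_Ico_eq_sum_range]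
  refine Finset.sum_congr rfl fun i _ => ?_
  push_cast
  rw [add_comm]
private lemma aux_A_tendsto (t : ℕ) (ht : 1 ≤ t) (q : ℝ) (hq : 1/2 ≤ q) :
    Tendsto (fun T : ℕ => ∑ s ∈ (Finset.Icc 1 T).erase t, (s:ℝ)^(2*q)/((s:ℝ)-t)^2)
      atTop atTop := by
  have htail : Tendsto (fun T : ℕ => (∑ s ∈ Finset.Ioc 0 T, (1:ℝ)/s)
      - ∑ s ∈ Finset.Ioc 0 t, (1:ℝ)/s) atTop atTop := by
    simp only [sub_eq_add_neg]
    exact tendsto_atTop_add_const_right _ _ aux_harm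
  refine tendsto_atTop_mono' atTop ?_ htail
  filter_upwards [eventually_ge_atTop t] with T hT
  have hsplit : (∑ s ∈ Finset.Ioc 0 t, (1:ℝ)/s) + (∑ s ∈ Finset.Ioc t T, (1:ℝ)/s)
      = ∑ s ∈ Finset.Ioc 0 T, (1:ℝ)/s :=
    Finset.sum_Ioc_consecutive _ (Nat.zero_le t) hT
  have h1 : (∑ s ∈ Finset.Ioc t T, (1:ℝ)/s)
      ≤ ∑ s ∈ Finset.Ioc t T, (s:ℝ)^(2*q)/((s:ℝ)-t)^2 := by
    refine Finset.sum_le_sum fun s hs => ?_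
    obtain ⟨hts, hsT⟩ := Finset.mem_Ioc.1 hs
    have hxt : (t:ℝ) < s := by exact_mod_cast hts
    have ht1 : (1:ℝ) ≤ t := by exact_mod_cast ht
    have hx1 : (1:ℝ) ≤ s := by linarith
    have hx0 : (0:ℝ) < s := by linarith
    have heq : (s:ℝ)/(s:ℝ)^2 = 1/(s:ℝ) := by
      rw [pow_two, ← div_div, div_self hx0.ne']
    rw [← heq]
    have hd0 : (0:ℝ) < (s:ℝ)-t := by linarith
    refine div_le_div₀ (Real.rpow_nonneg hx0.le _) ?_ (by positivity) ?_
    · calc (s:ℝ) = (s:ℝ)^(1:ℝ) := (Real.rpow_one _).symm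
        _ ≤ (s:ℝ)^(2*q) := Real.rpow_le_rpow_of_exponent_le hx1 (by linarith)
    · exact pow_le_pow_left₀ (by linarith) (by linarith) 2
  have h2 : (∑ s ∈ Finset.Ioc t T, (s:ℝ)^(2*q)/((s:ℝ)-t)^2)
      ≤ ∑ s ∈ (Finset.Icc 1 T).erase t, (s:ℝ)^(2*q)/((s:ℝ)-t)^2 := by
    refine Finset.sum_le_sum_of_subset_of_nonneg ?_
      (fun s _ _ => div_nonneg (Real.rpow_nonneg (Nat.cast_nonneg s) _) (sq_nonneg _))
    intro s hs
    simp only [Finset.mem_Ioc, Finset.mem_erase, Finset.mem_Icc] at *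
    omega
  linarith

theorem statement4 (t : ℕ) (ht : 1 ≤ t) (q p : ℝ) (hq : 1 / 2 ≤ q) (hpq : q < p)
    (ρ : ℕ → ℝ) (hρ : ∀ s, |ρ s| ≤ 1) :
    Tendsto (fun T : ℕ =>
        ((t : ℝ) * ρ t * ∑ s ∈ (Finset.Icc 1 T).erase t, (s : ℝ) ^ (2 * q) / ((s : ℝ) - t) ^ 2
            + ∑ s ∈ (Finset.Icc 1 T).erase t, ρ s * (s : ℝ) ^ (1 - 2 * p) / ((s : ℝ) - t) ^ 2
            - 2 * ∑ s ∈ (Finset.Icc 1 T).erase t,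
                ρ s * (s : ℝ) ^ (q - p + 1) / ((s : ℝ) - t) ^ 2
            + 2 * ∑ s ∈ Finset.Icc (t + 1) T,
                (s : ℝ) ^ (q - p) * ((s : ℝ) * ρ s - (t : ℝ) * ρ t) / ((s : ℝ) - t) ^ 2) /
          ((t : ℝ) * ∑ s ∈ (Finset.Icc 1 T).erase t, (s : ℝ) ^ (2 * q) / ((s : ℝ) - t) ^ 2
            + ∑ s ∈ (Finset.Icc 1 T).erase t, (s : ℝ) ^ (1 - 2 * p) / ((s : ℝ) - t) ^ 2
            - 2 * ∑ s ∈ (Finset.Icc 1 T).erase t, (s : ℝ) ^ (q - p + 1) / ((s : ℝ) - t) ^ 2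
            + 2 * ∑ s ∈ Finset.Icc (t + 1) T, (s : ℝ) ^ (q - p) / ((s : ℝ) - t)))
      atTop (nhds (ρ t)) := by
  have ht0 : (0:ℝ) < t := by exact_mod_cast ht
  have ht1 : (1:ℝ) ≤ t := by exact_mod_cast ht
  set S : ℝ := ∑' n : ℕ, (n:ℝ)^(q-p-1) with hSdef
  have hSnn : 0 ≤ S := tsum_nonneg fun n => Real.rpow_nonneg (Nat.cast_nonneg n) _
  set Kc : ℝ := (2*(t:ℝ)+1)^2 with hKcdef
  have hKc0 : (0:ℝ) ≤ Kc := by positivity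
  -- membership helpers
  have hmem : ∀ {T s : ℕ}, s ∈ (Finset.Icc 1 T).erase t → 1 ≤ s ∧ s ≠ t := by
    intro T s hs
    obtain ⟨h1, h2⟩ := Finset.mem_erase.1 hs
    exact ⟨(Finset.mem_Icc.1 h2).1, h1⟩
  -- bound for the B-sums
  have hB : ∀ T : ℕ,
      |(∑ s ∈ (Finset.Icc 1 T).erase t, ρ s * (s:ℝ)^(1-2*p)/((s:ℝ)-t)^2)
        - 2*(∑ s ∈ (Finset.Icc 1 T).erase t, ρ s * (s:ℝ)^(q-p+1)/((s:ℝ)-t)^2)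
        + 2*(∑ s ∈ Finset.Icc (t+1) T,
            (s:ℝ)^(q-p)*((s:ℝ)*ρ s - (t:ℝ)*ρ t)/((s:ℝ)-t)^2)|
      ≤ Kc*S + 2*(Kc*S) + 2*(2*Kc*S) := by
    intro T
    have h1 : |∑ s ∈ (Finset.Icc 1 T).erase t, ρ s * (s:ℝ)^(1-2*p)/((s:ℝ)-t)^2| ≤ Kc*S := by
      refine aux_sumbound q p hpq _ Kc hKc0 _ fun s hs => ?_
      obtain ⟨hs1, hst⟩ := hmem hs
      have hx0 : (0:ℝ) < s := by exact_mod_cast hs1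
      calc |ρ s * (s:ℝ)^(1-2*p)/((s:ℝ)-t)^2|
          = |ρ s| * ((s:ℝ)^(1-2*p)/((s:ℝ)-t)^2) := by
            rw [abs_div, abs_mul, abs_of_nonneg (Real.rpow_nonneg hx0.le _),
              abs_of_nonneg (sq_nonneg ((s:ℝ)-(t:ℝ))), mul_div_assoc]
        _ ≤ 1 * ((s:ℝ)^(1-2*p)/((s:ℝ)-t)^2) :=
            mul_le_mul_of_nonneg_right (hρ s)
              (div_nonneg (Real.rpow_nonneg hx0.le _) (sq_nonneg _))
        _ = (s:ℝ)^(1-2*p)/((s:ℝ)-t)^2 := one_mul _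
        _ ≤ Kc * (s:ℝ)^(q-p-1) := aux_term t ht q p (1-2*p) (by linarith) s hs1 hst
    have h2 : |∑ s ∈ (Finset.Icc 1 T).erase t, ρ s * (s:ℝ)^(q-p+1)/((s:ℝ)-t)^2| ≤ Kc*S := by
      refine aux_sumbound q p hpq _ Kc hKc0 _ fun s hs => ?_
      obtain ⟨hs1, hst⟩ := hmem hs
      have hx0 : (0:ℝ) < s := by exact_mod_cast hs1
      calc |ρ s * (s:ℝ)^(q-p+1)/((s:ℝ)-t)^2|
          = |ρ s| * ((s:ℝ)^(q-p+1)/((s:ℝ)-t)^2) := by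
            rw [abs_div, abs_mul, abs_of_nonneg (Real.rpow_nonneg hx0.le _),
              abs_of_nonneg (sq_nonneg ((s:ℝ)-(t:ℝ))), mul_div_assoc]
        _ ≤ 1 * ((s:ℝ)^(q-p+1)/((s:ℝ)-t)^2) :=
            mul_le_mul_of_nonneg_right (hρ s)
              (div_nonneg (Real.rpow_nonneg hx0.le _) (sq_nonneg _))
        _ = (s:ℝ)^(q-p+1)/((s:ℝ)-t)^2 := one_mul _
        _ ≤ Kc * (s:ℝ)^(q-p-1) := aux_term t ht q p (q-p+1) le_rfl s hs1 hst
    have h3 : |∑ s ∈ Finset.Icc (t+1) T,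
        (s:ℝ)^(q-p)*((s:ℝ)*ρ s - (t:ℝ)*ρ t)/((s:ℝ)-t)^2| ≤ (2*Kc)*S := by
      refine aux_sumbound q p hpq _ (2*Kc) (by linarith) _ fun s hs => ?_
      obtain ⟨hts, hsT⟩ := Finset.mem_Icc.1 hs
      have hst : t < s := by omega
      have hs1 : 1 ≤ s := by omega
      have hxt : (t:ℝ) < s := by exact_mod_cast hst
      have hx1 : (1:ℝ) ≤ s := by linarith
      have hx0 : (0:ℝ) < s := by linarith
      have habs : |(s:ℝ)*ρ s - (t:ℝ)*ρ t| ≤ 2*(s:ℝ) := by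
        calc |(s:ℝ)*ρ s - (t:ℝ)*ρ t| ≤ |(s:ℝ)*ρ s| + |(t:ℝ)*ρ t| := abs_sub _ _
          _ = (s:ℝ)*|ρ s| + (t:ℝ)*|ρ t| := by
              rw [abs_mul, abs_mul, abs_of_nonneg hx0.le, abs_of_nonneg ht0.le]
          _ ≤ (s:ℝ)*1 + (t:ℝ)*1 := by
              have := hρ s; have := hρ t
              have h4 := mul_le_mul_of_nonneg_left (hρ s) hx0.le
              have h5 := mul_le_mul_of_nonneg_left (hρ t) ht0.le
              linarith
          _ ≤ 2*(s:ℝ) := by linarith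
      calc |(s:ℝ)^(q-p)*((s:ℝ)*ρ s - (t:ℝ)*ρ t)/((s:ℝ)-t)^2|
          = (s:ℝ)^(q-p)*|(s:ℝ)*ρ s - (t:ℝ)*ρ t|/((s:ℝ)-t)^2 := by
            rw [abs_div, abs_mul, abs_of_nonneg (Real.rpow_nonneg hx0.le _),
              abs_of_nonneg (sq_nonneg ((s:ℝ)-(t:ℝ)))]
        _ ≤ (s:ℝ)^(q-p)*(2*(s:ℝ))/((s:ℝ)-t)^2 := by
            gcongr
        _ = 2*((s:ℝ)^(q-p+1)/((s:ℝ)-t)^2) := by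
            have hh : (s:ℝ)^(q-p)*(2*(s:ℝ)) = 2*(s:ℝ)^(q-p+1) := by
              rw [Real.rpow_add_one hx0.ne' (q-p)]; ring
            rw [hh, mul_div_assoc]
        _ ≤ 2*(Kc * (s:ℝ)^(q-p-1)) := by
            have := aux_term t ht q p (q-p+1) le_rfl s hs1 hst.ne'
            rw [hKcdef]
            linarith
        _ = (2*Kc) * (s:ℝ)^(q-p-1) := by ring
    calc |_ - 2*_ + 2*_|
        ≤ |(∑ s ∈ (Finset.Icc 1 T).erase t, ρ s * (s:ℝ)^(1-2*p)/((s:ℝ)-t)^2)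
            - 2*(∑ s ∈ (Finset.Icc 1 T).erase t, ρ s * (s:ℝ)^(q-p+1)/((s:ℝ)-t)^2)|
          + |2*(∑ s ∈ Finset.Icc (t+1) T,
              (s:ℝ)^(q-p)*((s:ℝ)*ρ s - (t:ℝ)*ρ t)/((s:ℝ)-t)^2)| := abs_add_le _ _
      _ ≤ Kc*S + 2*(Kc*S) + 2*(2*Kc*S) := by
          have ha := abs_sub (∑ s ∈ (Finset.Icc 1 T).erase t,
              ρ s * (s:ℝ)^(1-2*p)/((s:ℝ)-t)^2)
            (2*(∑ s ∈ (Finset.Icc 1 T).erase t, ρ s * (s:ℝ)^(q-p+1)/((s:ℝ)-t)^2))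
          rw [abs_mul, abs_two] at *
          linarith
  -- bound for the C-sums
  have hC : ∀ T : ℕ,
      |(∑ s ∈ (Finset.Icc 1 T).erase t, (s:ℝ)^(1-2*p)/((s:ℝ)-t)^2)
        - 2*(∑ s ∈ (Finset.Icc 1 T).erase t, (s:ℝ)^(q-p+1)/((s:ℝ)-t)^2)
        + 2*(∑ s ∈ Finset.Icc (t+1) T, (s:ℝ)^(q-p)/((s:ℝ)-t))|
      ≤ Kc*S + 2*(Kc*S) + 2*((2*(t:ℝ)+1)*S) := by
    intro T
    have h1 : |∑ s ∈ (Finset.Icc 1 T).erase t, (s:ℝ)^(1-2*p)/((s:ℝ)-t)^2| ≤ Kc*S := by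
      refine aux_sumbound q p hpq _ Kc hKc0 _ fun s hs => ?_
      obtain ⟨hs1, hst⟩ := hmem hs
      have hx0 : (0:ℝ) < s := by exact_mod_cast hs1
      rw [abs_of_nonneg (div_nonneg (Real.rpow_nonneg hx0.le _) (sq_nonneg _))]
      exact aux_term t ht q p (1-2*p) (by linarith) s hs1 hst
    have h2 : |∑ s ∈ (Finset.Icc 1 T).erase t, (s:ℝ)^(q-p+1)/((s:ℝ)-t)^2| ≤ Kc*S := by
      refine aux_sumbound q p hpq _ Kc hKc0 _ fun s hs => ?_
      obtain ⟨hs1, hst⟩ := hmem hs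
      have hx0 : (0:ℝ) < s := by exact_mod_cast hs1
      rw [abs_of_nonneg (div_nonneg (Real.rpow_nonneg hx0.le _) (sq_nonneg _))]
      exact aux_term t ht q p (q-p+1) le_rfl s hs1 hst
    have h3 : |∑ s ∈ Finset.Icc (t+1) T, (s:ℝ)^(q-p)/((s:ℝ)-t)| ≤ (2*(t:ℝ)+1)*S := by
      refine aux_sumbound q p hpq _ (2*(t:ℝ)+1) (by linarith) _ fun s hs => ?_
      obtain ⟨hts, hsT⟩ := Finset.mem_Icc.1 hs
      have hst : t < s := by omega
      have hxt : (t:ℝ) < s := by exact_mod_cast hst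
      have hx0 : (0:ℝ) < s := by linarith
      rw [abs_of_nonneg (div_nonneg (Real.rpow_nonneg hx0.le _) (by linarith))]
      exact aux_term2 t ht q p s hst
    calc |_ - 2*_ + 2*_|
        ≤ |(∑ s ∈ (Finset.Icc 1 T).erase t, (s:ℝ)^(1-2*p)/((s:ℝ)-t)^2)
            - 2*(∑ s ∈ (Finset.Icc 1 T).erase t, (s:ℝ)^(q-p+1)/((s:ℝ)-t)^2)|
          + |2*(∑ s ∈ Finset.Icc (t+1) T, (s:ℝ)^(q-p)/((s:ℝ)-t))| := abs_add_le _ _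
      _ ≤ Kc*S + 2*(Kc*S) + 2*((2*(t:ℝ)+1)*S) := by
          have ha := abs_sub (∑ s ∈ (Finset.Icc 1 T).erase t, (s:ℝ)^(1-2*p)/((s:ℝ)-t)^2)
            (2*(∑ s ∈ (Finset.Icc 1 T).erase t, (s:ℝ)^(q-p+1)/((s:ℝ)-t)^2))
          rw [abs_mul, abs_two] at *
          linarith
  have hlim := aux_lim (ρ t) (t:ℝ) ht0
    (fun T => ∑ s ∈ (Finset.Icc 1 T).erase t, (s:ℝ)^(2*q)/((s:ℝ)-t)^2)
    (fun T => (∑ s ∈ (Finset.Icc 1 T).erase t, ρ s * (s:ℝ)^(1-2*p)/((s:ℝ)-t)^2)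
        - 2*(∑ s ∈ (Finset.Icc 1 T).erase t, ρ s * (s:ℝ)^(q-p+1)/((s:ℝ)-t)^2)
        + 2*(∑ s ∈ Finset.Icc (t+1) T,
            (s:ℝ)^(q-p)*((s:ℝ)*ρ s - (t:ℝ)*ρ t)/((s:ℝ)-t)^2))
    (fun T => (∑ s ∈ (Finset.Icc 1 T).erase t, (s:ℝ)^(1-2*p)/((s:ℝ)-t)^2)
        - 2*(∑ s ∈ (Finset.Icc 1 T).erase t, (s:ℝ)^(q-p+1)/((s:ℝ)-t)^2)
        + 2*(∑ s ∈ Finset.Icc (t+1) T, (s:ℝ)^(q-p)/((s:ℝ)-t)))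
    (Kc*S + 2*(Kc*S) + 2*(2*Kc*S)) (Kc*S + 2*(Kc*S) + 2*((2*(t:ℝ)+1)*S))
    (aux_A_tendsto t ht q hq) hB hC
  refine hlim.congr fun T => ?_
  ring
end

section
/- Fix σ > 0 and let (W, U) be a correlated Brownian motion pair with dynamic correlation r. For the estimator γ̂_t of Eq. (2) and the corresponding variance estimators σ̂²_{t,W} and σ̂²_{t,U}, if c > a > 0 and b > a + 10, then for each fixed integer t ≥ 1 the variances Var(γ̂_t), Var(σ̂²_{t,W}) and Var(σ̂²_{t,U}) all converge to 0 as T → ∞. -/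
open MeasureTheory ProbabilityTheory Filter Finset

/-- The Eq. (2) covariance estimator `γ̂_t` for a Geometric Brownian motion pair
`(e^{σW}, e^{σU})`; with `U := W` it is the variance estimator `σ̂²_{t,W}`. -/
noncomputable def gbmGammaEq2 {Ω : Type*} [MeasureSpace Ω] (σ a b c : ℝ) (W U : ℕ → Ω → ℝ)
    (T t : ℕ) (ω : Ω) : ℝ :=
  Real.exp (-(c * σ ^ 2 * T)) * ∑ k ∈ Finset.Icc 1 T,
    ((Real.exp (-(b * σ ^ 2 * k) / 2) * (Real.exp (σ * W k ω) - Real.exp (σ ^ 2 * k / 2))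
        - Real.exp (a * σ ^ 2 * k / 2) * (Real.exp (σ * W t ω) - Real.exp (σ ^ 2 * t / 2)))
      * (Real.exp (-(b * σ ^ 2 * k) / 2) * (Real.exp (σ * U k ω) - Real.exp (σ ^ 2 * k / 2))
        - Real.exp (a * σ ^ 2 * k / 2) * (Real.exp (σ * U t ω) - Real.exp (σ ^ 2 * t / 2))))

/-- The dynamic correlation `ρ_t` of the Geometric Brownian motion pair
`(e^{σW}, e^{σU})` when `(W,U)` has dynamic correlation `r`. -/
noncomputable def gbmCorr (σ : ℝ) (r : ℕ → ℝ) (t : ℕ) : ℝ :=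
  (Real.exp (r t * σ ^ 2 * t) - 1) / (Real.exp (σ ^ 2 * t) - 1)

open scoped NNReal ENNReal


lemma exp_pow4 (p : ℝ) : Real.exp p ^ 4 = Real.exp (4 * p) := by
  rw [show (4:ℝ) * p = ((4:ℕ):ℝ) * p by norm_num, Real.exp_nat_mul]

lemma gauss_mgf {v : ℝ≥0} (hv : v ≠ 0) (s : ℝ) :
    Integrable (fun x => Real.exp (s * x)) (gaussianReal 0 v) ∧
    ∫ x, Real.exp (s * x) ∂(gaussianReal 0 v) = Real.exp ((v:ℝ) * s ^ 2 / 2) := by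
  have hv' : 0 < (v:ℝ) := by exact_mod_cast pos_iff_ne_zero.mpr hv
  have h2v : (2*(v:ℝ)) ≠ 0 := by positivity
  have hpt : ∀ x : ℝ, gaussianPDFReal 0 v x * Real.exp (s * x)
      = Real.exp ((v:ℝ) * s ^ 2 / 2) * gaussianPDFReal (s * v) v x := by
    intro x
    unfold gaussianPDFReal
    rw [mul_assoc, ← Real.exp_add, mul_left_comm, ← Real.exp_add]
    congr 1
    field_simp
    ring
  have hfm : Measurable fun x => Real.toNNReal (gaussianPDFReal 0 v x) :=
    (measurable_gaussianPDFReal 0 v).real_toNNReal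
  have hden : gaussianReal 0 v
      = volume.withDensity (fun x => ((Real.toNNReal (gaussianPDFReal 0 v x) : ℝ≥0) : ℝ≥0∞)) := by
    rw [gaussianReal_of_var_ne_zero 0 hv]; rfl
  have hsm : ∀ x, (Real.toNNReal (gaussianPDFReal 0 v x) : ℝ≥0) • Real.exp (s * x)
      = Real.exp ((v:ℝ) * s ^ 2 / 2) * gaussianPDFReal (s * v) v x := fun x => by
    simp only [NNReal.smul_def, Real.coe_toNNReal _ (gaussianPDFReal_nonneg 0 v x)]
    exact hpt x
  constructor
  · rw [hden, integrable_withDensity_iff_integrable_smul hfm]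
    exact ((integrable_gaussianPDFReal (s*v) v).const_mul _).congr
      (Filter.Eventually.of_forall fun x => (hsm x).symm)
  · rw [hden, integral_withDensity_eq_integral_smul hfm]
    calc ∫ x, (Real.toNNReal (gaussianPDFReal 0 v x) : ℝ≥0) • Real.exp (s * x)
        = ∫ x, Real.exp ((v:ℝ) * s ^ 2 / 2) * gaussianPDFReal (s * v) v x :=
          integral_congr_ae (Filter.Eventually.of_forall hsm)
      _ = Real.exp ((v:ℝ) * s ^ 2 / 2) * ∫ x, gaussianPDFReal (s * v) v x :=
          integral_const_mul _ _
      _ = Real.exp ((v:ℝ) * s ^ 2 / 2) := by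
          rw [integral_gaussianPDFReal_eq_one (s*v) hv, mul_one]

lemma bm_map {Ω : Type*} [MeasureSpace Ω] {X : ℕ → Ω → ℝ} (hX : IsDiscreteBM X) (k : ℕ) :
    Measure.map (X k) (ℙ : Measure Ω) = gaussianReal 0 (k : NNReal) := by
  have h1 : (fun ω => X k ω - X 0 ω) =ᵐ[(ℙ : Measure Ω)] X k :=
    hX.init.mono fun ω h => by simp [h]
  calc Measure.map (X k) (ℙ : Measure Ω)
      = Measure.map (fun ω => X k ω - X 0 ω) (ℙ : Measure Ω) := (Measure.map_congr h1).symm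
    _ = gaussianReal 0 ((k - 0 : ℕ) : NNReal) := hX.incr 0 k (Nat.zero_le k)
    _ = gaussianReal 0 (k : NNReal) := by rw [Nat.sub_zero]

lemma bm_exp_int {Ω : Type*} [MeasureSpace Ω] [IsProbabilityMeasure (ℙ : Measure Ω)]
    {X : ℕ → Ω → ℝ} (hX : IsDiscreteBM X) {k : ℕ} (hk : 1 ≤ k) (s : ℝ) :
    Integrable (fun ω => Real.exp (s * X k ω)) (ℙ : Measure Ω) ∧
    ∫ ω, Real.exp (s * X k ω) ∂(ℙ : Measure Ω) = Real.exp ((k:ℝ) * s ^ 2 / 2) := by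
  have hk0 : (k : NNReal) ≠ 0 := by
    simpa using Nat.pos_iff_ne_zero.mp hk
  have hmap := bm_map hX k
  have hg : AEStronglyMeasurable (fun x : ℝ => Real.exp (s * x)) (Measure.map (X k) (ℙ : Measure Ω)) :=
    (Real.measurable_exp.comp (measurable_id.const_mul s)).aestronglyMeasurable
  have hXm : AEMeasurable (X k) (ℙ : Measure Ω) := (hX.meas k).aemeasurable
  constructor
  · have h := (gauss_mgf hk0 s).1
    rw [← hmap] at h
    exact (integrable_map_measure hg hXm).mp h
  · have h1 : ∫ ω, Real.exp (s * X k ω) ∂(ℙ : Measure Ω)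
        = ∫ x, Real.exp (s * x) ∂(Measure.map (X k) (ℙ : Measure Ω)) := (integral_map hXm hg).symm
    rw [h1, hmap, (gauss_mgf hk0 s).2]
    norm_num

lemma alg_helper (e1 e2 u v w z : ℝ) (he1 : 0 ≤ e1) (he2 : 0 ≤ e2) (hu : 0 ≤ u)
    (hv : 0 ≤ v) (hw : 0 ≤ w) (hz : 0 ≤ z) :
    (e1*(u - v) - e2*(w - z))^4 ≤ 64*((e1*u)^4 + (e1*v)^4 + (e2*w)^4 + (e2*z)^4) := by
  have key : ∀ y1 y2 y3 y4 : ℝ, (y1+y2+y3+y4)^2 ≤ 4*(y1^2+y2^2+y3^2+y4^2) := by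
    intro y1 y2 y3 y4
    nlinarith [sq_nonneg (y1-y2), sq_nonneg (y1-y3), sq_nonneg (y1-y4), sq_nonneg (y2-y3),
      sq_nonneg (y2-y4), sq_nonneg (y3-y4)]
  set A := e1*(u-v) - e2*(w-z) with hA
  set S := e1*u + e1*v + e2*w + e2*z with hS
  have habs : |A| ≤ S := by
    rw [abs_le]
    constructor <;>
      nlinarith [mul_nonneg he1 hu, mul_nonneg he1 hv, mul_nonneg he2 hw, mul_nonneg he2 hz]
  have h1 : A^2 ≤ S^2 := by
    calc A^2 = |A|^2 := (sq_abs A).symm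
    _ ≤ S^2 := pow_le_pow_left₀ (abs_nonneg A) habs 2
  have h2 : S^2 ≤ 4*((e1*u)^2+(e1*v)^2+(e2*w)^2+(e2*z)^2) := key _ _ _ _
  have h3 : ((e1*u)^2+(e1*v)^2+(e2*w)^2+(e2*z)^2)^2
      ≤ 4*(((e1*u)^2)^2+((e1*v)^2)^2+((e2*w)^2)^2+((e2*z)^2)^2) := key _ _ _ _
  calc A^4 = (A^2)^2 := by ring
  _ ≤ (4*((e1*u)^2+(e1*v)^2+(e2*w)^2+(e2*z)^2))^2 :=
      pow_le_pow_left₀ (sq_nonneg A) (le_trans h1 h2) 2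
  _ = 16*(((e1*u)^2+(e1*v)^2+(e2*w)^2+(e2*z)^2))^2 := by ring
  _ ≤ 16*(4*(((e1*u)^2)^2+((e1*v)^2)^2+((e2*w)^2)^2+((e2*z)^2)^2)) := by linarith
  _ = 64*((e1*u)^4 + (e1*v)^4 + (e2*w)^4 + (e2*z)^4) := by ring

lemma prod_sq_le (x y qx qy : ℝ) (hx : x^4 ≤ qx) (hy : y^4 ≤ qy) :
    (x*y)^2 ≤ (qx + qy)/2 := by nlinarith [sq_nonneg (x^2 - y^2)]

noncomputable def Qf {Ω : Type*} (σ a b : ℝ) (Z : ℕ → Ω → ℝ) (t k : ℕ) (ω : Ω) : ℝ :=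
  64*((Real.exp (-(b * σ ^ 2 * k) / 2) * Real.exp (σ * Z k ω))^4
    + (Real.exp (-(b * σ ^ 2 * k) / 2) * Real.exp (σ ^ 2 * k / 2))^4
    + (Real.exp (a * σ ^ 2 * k / 2) * Real.exp (σ * Z t ω))^4
    + (Real.exp (a * σ ^ 2 * k / 2) * Real.exp (σ ^ 2 * t / 2))^4)

lemma A_pow4_le_Qf {Ω : Type*} (σ a b : ℝ) (Z : ℕ → Ω → ℝ) (t k : ℕ) (ω : Ω) :
    (Real.exp (-(b * σ ^ 2 * k) / 2) * (Real.exp (σ * Z k ω) - Real.exp (σ ^ 2 * k / 2))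
      - Real.exp (a * σ ^ 2 * k / 2) * (Real.exp (σ * Z t ω) - Real.exp (σ ^ 2 * t / 2)))^4
      ≤ Qf σ a b Z t k ω := by
  unfold Qf
  exact alg_helper _ _ _ _ _ _ (Real.exp_nonneg _) (Real.exp_nonneg _) (Real.exp_nonneg _)
    (Real.exp_nonneg _) (Real.exp_nonneg _) (Real.exp_nonneg _)

lemma Qf_bound {Ω : Type*} [MeasureSpace Ω] [IsProbabilityMeasure (ℙ : Measure Ω)]
    {σ a b : ℝ} (ha : 0 < a) (hb : a + 10 < b) {Z : ℕ → Ω → ℝ} (hZ : IsDiscreteBM Z)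
    {t k : ℕ} (ht : 1 ≤ t) (hk : 1 ≤ k) :
    Integrable (Qf σ a b Z t k) (ℙ : Measure Ω) ∧
    ∫ ω, Qf σ a b Z t k ω ∂(ℙ : Measure Ω)
      ≤ 256 * Real.exp (8 * σ ^ 2 * t) * Real.exp (2 * a * σ ^ 2 * k) := by
  have hint1 := bm_exp_int hZ hk (4*σ)
  have hint2 := bm_exp_int hZ ht (4*σ)
  have hrw : ∀ ω, Qf σ a b Z t k ω =
      64 * Real.exp (4*(-(b * σ ^ 2 * k) / 2)) * Real.exp ((4*σ) * Z k ω)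
      + (64 * Real.exp (4*(-(b * σ ^ 2 * k) / 2)) * Real.exp (4*(σ ^ 2 * k / 2))
      + (64 * Real.exp (4*(a * σ ^ 2 * k / 2)) * Real.exp ((4*σ) * Z t ω)
      + 64 * Real.exp (4*(a * σ ^ 2 * k / 2)) * Real.exp (4*(σ ^ 2 * t / 2)))) := by
    intro ω
    unfold Qf
    simp only [mul_pow, exp_pow4]
    rw [show (4*σ) * Z k ω = 4*(σ * Z k ω) by ring, show (4*σ) * Z t ω = 4*(σ * Z t ω) by ring]
    ring
  have i1 : Integrable (fun ω : Ω =>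
      64 * Real.exp (4*(-(b * σ ^ 2 * k) / 2)) * Real.exp ((4*σ) * Z k ω)) (ℙ : Measure Ω) :=
    hint1.1.const_mul _
  have ic2 : Integrable (fun _ : Ω =>
      64 * Real.exp (4*(-(b * σ ^ 2 * k) / 2)) * Real.exp (4*(σ ^ 2 * k / 2))) (ℙ : Measure Ω) :=
    integrable_const _
  have i3 : Integrable (fun ω : Ω =>
      64 * Real.exp (4*(a * σ ^ 2 * k / 2)) * Real.exp ((4*σ) * Z t ω)) (ℙ : Measure Ω) :=
    hint2.1.const_mul _
  have ic4 : Integrable (fun _ : Ω =>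
      64 * Real.exp (4*(a * σ ^ 2 * k / 2)) * Real.exp (4*(σ ^ 2 * t / 2))) (ℙ : Measure Ω) :=
    integrable_const _
  have i34 : Integrable (fun ω : Ω =>
      64 * Real.exp (4*(a * σ ^ 2 * k / 2)) * Real.exp ((4*σ) * Z t ω)
      + 64 * Real.exp (4*(a * σ ^ 2 * k / 2)) * Real.exp (4*(σ ^ 2 * t / 2))) (ℙ : Measure Ω) :=
    i3.add ic4
  have i234 : Integrable (fun ω : Ω =>
      64 * Real.exp (4*(-(b * σ ^ 2 * k) / 2)) * Real.exp (4*(σ ^ 2 * k / 2))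
      + (64 * Real.exp (4*(a * σ ^ 2 * k / 2)) * Real.exp ((4*σ) * Z t ω)
      + 64 * Real.exp (4*(a * σ ^ 2 * k / 2)) * Real.exp (4*(σ ^ 2 * t / 2)))) (ℙ : Measure Ω) :=
    ic2.add i34
  have hQi : Integrable (Qf σ a b Z t k) (ℙ : Measure Ω) :=
    (i1.add i234).congr (Filter.Eventually.of_forall fun ω => (hrw ω).symm)
  refine ⟨hQi, ?_⟩
  have hIQ : ∫ ω, Qf σ a b Z t k ω ∂(ℙ : Measure Ω)
      = 64 * Real.exp (4*(-(b * σ ^ 2 * k) / 2)) * Real.exp ((k:ℝ) * (4*σ)^2 / 2)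
      + (64 * Real.exp (4*(-(b * σ ^ 2 * k) / 2)) * Real.exp (4*(σ ^ 2 * k / 2))
      + (64 * Real.exp (4*(a * σ ^ 2 * k / 2)) * Real.exp ((t:ℝ) * (4*σ)^2 / 2)
      + 64 * Real.exp (4*(a * σ ^ 2 * k / 2)) * Real.exp (4*(σ ^ 2 * t / 2)))) := by
    rw [integral_congr_ae (Filter.Eventually.of_forall hrw)]
    rw [integral_add i1 i234, integral_add ic2 i34, integral_add i3 ic4]
    simp only [integral_const_mul, integral_const]
    rw [hint1.2, hint2.2]
    simp
  rw [hIQ]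
  have hσ2k : (0:ℝ) ≤ σ^2*k := by positivity
  have hσ2t : (0:ℝ) ≤ σ^2*t := by positivity
  have hF : 1 ≤ Real.exp (8*σ^2*t) := Real.one_le_exp (by positivity)
  have hE : 0 < Real.exp (2*a*σ^2*k) := Real.exp_pos _
  have p1 : Real.exp (4*(-(b * σ ^ 2 * k) / 2)) * Real.exp ((k:ℝ) * (4*σ)^2 / 2)
      ≤ Real.exp (2*a*σ^2*k) := by
    rw [← Real.exp_add]
    apply Real.exp_le_exp.mpr
    nlinarith [mul_nonneg (show (0:ℝ) ≤ 2*a+2*b-8 by linarith) hσ2k]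
  have p2 : Real.exp (4*(-(b * σ ^ 2 * k) / 2)) * Real.exp (4*(σ ^ 2 * k / 2))
      ≤ Real.exp (2*a*σ^2*k) := by
    rw [← Real.exp_add]
    apply Real.exp_le_exp.mpr
    nlinarith [mul_nonneg (show (0:ℝ) ≤ 2*a+2*b-2 by linarith) hσ2k]
  have p3 : Real.exp (4*(a * σ ^ 2 * k / 2)) * Real.exp ((t:ℝ) * (4*σ)^2 / 2)
      ≤ Real.exp (8*σ^2*t) * Real.exp (2*a*σ^2*k) := by
    rw [← Real.exp_add, ← Real.exp_add]
    apply Real.exp_le_exp.mpr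
    nlinarith
  have p4 : Real.exp (4*(a * σ ^ 2 * k / 2)) * Real.exp (4*(σ ^ 2 * t / 2))
      ≤ Real.exp (8*σ^2*t) * Real.exp (2*a*σ^2*k) := by
    rw [← Real.exp_add, ← Real.exp_add]
    apply Real.exp_le_exp.mpr
    nlinarith
  have hEF : Real.exp (2*a*σ^2*k) ≤ Real.exp (8*σ^2*t) * Real.exp (2*a*σ^2*k) :=
    le_mul_of_one_le_left hE.le hF
  nlinarith [p1, p2, p3, p4, hEF]

lemma main_lemma {Ω : Type*} [MeasureSpace Ω] [IsProbabilityMeasure (ℙ : Measure Ω)]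
    (σ : ℝ) (hσ : 0 < σ) (a b c : ℝ) (ha : 0 < a) (hac : a < c) (hb : a + 10 < b)
    (X Y : ℕ → Ω → ℝ) (hX : IsDiscreteBM X) (hY : IsDiscreteBM Y) (t : ℕ) (ht : 1 ≤ t) :
    Tendsto (fun T => variance (gbmGammaEq2 σ a b c X Y T t) (ℙ : Measure Ω)) atTop (nhds 0) := by
  have hbound : ∀ T : ℕ, variance (gbmGammaEq2 σ a b c X Y T t) (ℙ : Measure Ω)
      ≤ (256 * Real.exp (8 * σ ^ 2 * t)) * ((T:ℝ)^2 * Real.exp (-(2*(c-a)*σ^2)) ^ T) := by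
    intro T
    have m1 : ∀ (Z : ℕ → Ω → ℝ), IsDiscreteBM Z → ∀ (j : ℕ) (c1 c2 : ℝ),
        Measurable fun ω => c1 * (Real.exp (σ * Z j ω) - c2) := fun Z hZ j c1 c2 =>
      ((Real.measurable_exp.comp ((hZ.meas j).const_mul σ)).sub measurable_const).const_mul c1
    have hmeas : AEStronglyMeasurable (gbmGammaEq2 σ a b c X Y T t) (ℙ : Measure Ω) := by
      apply Measurable.aestronglyMeasurable
      unfold gbmGammaEq2
      refine Measurable.const_mul ?_ _
      refine Finset.measurable_sum _ fun k _ => ?_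
      exact ((m1 X hX k _ _).sub (m1 X hX t _ _)).mul ((m1 Y hY k _ _).sub (m1 Y hY t _ _))
    have h1 := variance_le_expectation_sq (X := gbmGammaEq2 σ a b c X Y T t) hmeas
    simp only [Pi.pow_apply] at h1
    have hQX : ∀ k, 1 ≤ k → Integrable (Qf σ a b X t k) (ℙ : Measure Ω) ∧
        ∫ ω, Qf σ a b X t k ω ∂(ℙ : Measure Ω)
          ≤ 256 * Real.exp (8 * σ ^ 2 * t) * Real.exp (2 * a * σ ^ 2 * k) :=
      fun k hk => Qf_bound ha hb hX ht hk
    have hQY : ∀ k, 1 ≤ k → Integrable (Qf σ a b Y t k) (ℙ : Measure Ω) ∧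
        ∫ ω, Qf σ a b Y t k ω ∂(ℙ : Measure Ω)
          ≤ 256 * Real.exp (8 * σ ^ 2 * t) * Real.exp (2 * a * σ ^ 2 * k) :=
      fun k hk => Qf_bound ha hb hY ht hk
    have hsummand_int : ∀ k ∈ Finset.Icc 1 T,
        Integrable (fun ω => (Qf σ a b X t k ω + Qf σ a b Y t k ω)/2) (ℙ : Measure Ω) := by
      intro k hk
      have hk1 := (Finset.mem_Icc.mp hk).1
      exact ((hQX k hk1).1.add (hQY k hk1).1).div_const 2
    have hgi : Integrable (fun ω => Real.exp (-(c * σ ^ 2 * T))^2 *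
        ((T:ℝ) * ∑ k ∈ Finset.Icc 1 T, (Qf σ a b X t k ω + Qf σ a b Y t k ω)/2))
        (ℙ : Measure Ω) :=
      ((integrable_finset_sum _ hsummand_int).const_mul _).const_mul _
    have hpt : ∀ ω, (gbmGammaEq2 σ a b c X Y T t ω)^2 ≤ Real.exp (-(c * σ ^ 2 * T))^2 *
        ((T:ℝ) * ∑ k ∈ Finset.Icc 1 T, (Qf σ a b X t k ω + Qf σ a b Y t k ω)/2) := by
      intro ω
      unfold gbmGammaEq2
      rw [mul_pow]
      refine mul_le_mul_of_nonneg_left ?_ (sq_nonneg _)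
      calc (∑ k ∈ Finset.Icc 1 T,
            ((Real.exp (-(b * σ ^ 2 * k) / 2) * (Real.exp (σ * X k ω) - Real.exp (σ ^ 2 * k / 2))
              - Real.exp (a * σ ^ 2 * k / 2) * (Real.exp (σ * X t ω) - Real.exp (σ ^ 2 * t / 2)))
            * (Real.exp (-(b * σ ^ 2 * k) / 2) * (Real.exp (σ * Y k ω) - Real.exp (σ ^ 2 * k / 2))
              - Real.exp (a * σ ^ 2 * k / 2) * (Real.exp (σ * Y t ω) - Real.exp (σ ^ 2 * t / 2)))))^2
          ≤ ((Finset.Icc 1 T).card : ℝ) * ∑ k ∈ Finset.Icc 1 T,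
            ((Real.exp (-(b * σ ^ 2 * k) / 2) * (Real.exp (σ * X k ω) - Real.exp (σ ^ 2 * k / 2))
              - Real.exp (a * σ ^ 2 * k / 2) * (Real.exp (σ * X t ω) - Real.exp (σ ^ 2 * t / 2)))
            * (Real.exp (-(b * σ ^ 2 * k) / 2) * (Real.exp (σ * Y k ω) - Real.exp (σ ^ 2 * k / 2))
              - Real.exp (a * σ ^ 2 * k / 2) * (Real.exp (σ * Y t ω) - Real.exp (σ ^ 2 * t / 2))))^2 :=
            sq_sum_le_card_mul_sum_sq
        _ ≤ (T:ℝ) * ∑ k ∈ Finset.Icc 1 T, (Qf σ a b X t k ω + Qf σ a b Y t k ω)/2 := by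
            rw [Nat.card_Icc, Nat.add_sub_cancel]
            refine mul_le_mul_of_nonneg_left ?_ (Nat.cast_nonneg T)
            refine Finset.sum_le_sum fun k _ => ?_
            exact prod_sq_le _ _ _ _ (A_pow4_le_Qf σ a b X t k ω) (A_pow4_le_Qf σ a b Y t k ω)
    have h2 : ∫ ω, (gbmGammaEq2 σ a b c X Y T t ω)^2 ∂(ℙ : Measure Ω)
        ≤ ∫ ω, Real.exp (-(c * σ ^ 2 * T))^2 *
          ((T:ℝ) * ∑ k ∈ Finset.Icc 1 T, (Qf σ a b X t k ω + Qf σ a b Y t k ω)/2)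
          ∂(ℙ : Measure Ω) :=
      integral_mono_of_nonneg (Filter.Eventually.of_forall fun ω => sq_nonneg _) hgi
        (Filter.Eventually.of_forall hpt)
    have h3 : ∫ ω, Real.exp (-(c * σ ^ 2 * T))^2 *
        ((T:ℝ) * ∑ k ∈ Finset.Icc 1 T, (Qf σ a b X t k ω + Qf σ a b Y t k ω)/2)
        ∂(ℙ : Measure Ω)
        ≤ Real.exp (-(c * σ ^ 2 * T))^2 *
          ((T:ℝ) * ((T:ℝ) * (256 * Real.exp (8 * σ ^ 2 * t) * Real.exp (2 * a * σ ^ 2 * T)))) := by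
      rw [integral_const_mul, integral_const_mul, integral_finset_sum _ hsummand_int]
      refine mul_le_mul_of_nonneg_left ?_ (sq_nonneg _)
      refine mul_le_mul_of_nonneg_left ?_ (Nat.cast_nonneg T)
      calc ∑ k ∈ Finset.Icc 1 T, ∫ ω, (Qf σ a b X t k ω + Qf σ a b Y t k ω)/2 ∂(ℙ : Measure Ω)
          ≤ ∑ _k ∈ Finset.Icc 1 T, (256 * Real.exp (8 * σ ^ 2 * t) * Real.exp (2 * a * σ ^ 2 * T)) := by
            refine Finset.sum_le_sum fun k hk => ?_
            obtain ⟨hk1, hk2⟩ := Finset.mem_Icc.mp hk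
            rw [integral_div, integral_add (hQX k hk1).1 (hQY k hk1).1]
            have hkT : Real.exp (2*a*σ^2*k) ≤ Real.exp (2*a*σ^2*T) := by
              apply Real.exp_le_exp.mpr
              have hkT' : (k:ℝ) ≤ (T:ℝ) := by exact_mod_cast hk2
              nlinarith [mul_nonneg (mul_nonneg (show (0:ℝ) ≤ 2*a by linarith) (sq_nonneg σ))
                (show (0:ℝ) ≤ (T:ℝ) - (k:ℝ) by linarith)]
            have hmul : 256 * Real.exp (8 * σ ^ 2 * t) * Real.exp (2 * a * σ ^ 2 * k)
                ≤ 256 * Real.exp (8 * σ ^ 2 * t) * Real.exp (2 * a * σ ^ 2 * T) := by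
              refine mul_le_mul_of_nonneg_left hkT (by positivity)
            linarith [(hQX k hk1).2, (hQY k hk1).2]
          _ = (T:ℝ) * (256 * Real.exp (8 * σ ^ 2 * t) * Real.exp (2 * a * σ ^ 2 * T)) := by
            rw [Finset.sum_const, Nat.card_Icc, Nat.add_sub_cancel, nsmul_eq_mul]
    have hexpT : Real.exp (-(c * σ ^ 2 * T))^2 * Real.exp (2 * a * σ ^ 2 * T)
        = Real.exp (-(2*(c-a)*σ^2)) ^ T := by
      rw [sq, ← Real.exp_add, ← Real.exp_add, ← Real.exp_nat_mul]
      congr 1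
      push_cast
      ring
    calc variance (gbmGammaEq2 σ a b c X Y T t) (ℙ : Measure Ω)
        ≤ ∫ ω, (gbmGammaEq2 σ a b c X Y T t ω)^2 ∂(ℙ : Measure Ω) := h1
      _ ≤ _ := h2
      _ ≤ Real.exp (-(c * σ ^ 2 * T))^2 *
          ((T:ℝ) * ((T:ℝ) * (256 * Real.exp (8 * σ ^ 2 * t) * Real.exp (2 * a * σ ^ 2 * T)))) := h3
      _ = (256 * Real.exp (8 * σ ^ 2 * t)) *
          ((T:ℝ)^2 * (Real.exp (-(c * σ ^ 2 * T))^2 * Real.exp (2 * a * σ ^ 2 * T))) := by ring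
      _ = (256 * Real.exp (8 * σ ^ 2 * t)) * ((T:ℝ)^2 * Real.exp (-(2*(c-a)*σ^2)) ^ T) := by
          rw [hexpT]
  have hr : |Real.exp (-(2*(c-a)*σ^2))| < 1 := by
    rw [abs_of_pos (Real.exp_pos _)]
    apply Real.exp_lt_one_iff.mpr
    have : 0 < (c-a)*σ^2 := mul_pos (sub_pos.mpr hac) (pow_pos hσ 2)
    linarith
  have h0 := (tendsto_pow_const_mul_const_pow_of_abs_lt_one 2 hr).const_mul
    (256 * Real.exp (8 * σ ^ 2 * t))
  simp only [mul_zero] at h0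
  exact squeeze_zero (fun T => variance_nonneg _ _) hbound h0


theorem statement7 {Ω : Type*} [MeasureSpace Ω] [IsProbabilityMeasure (ℙ : Measure Ω)]
    (σ : ℝ) (hσ : 0 < σ) (r : ℕ → ℝ) (W U : ℕ → Ω → ℝ) (h : IsCorrBMPair r W U)
    (a b c : ℝ) (ha : 0 < a) (hac : a < c) (hb : a + 10 < b) (t : ℕ) (ht : 1 ≤ t) :
    Tendsto (fun T => variance (gbmGammaEq2 σ a b c W U T t) (ℙ : Measure Ω))
      atTop (nhds 0) ∧
    Tendsto (fun T => variance (gbmGammaEq2 σ a b c W W T t) (ℙ : Measure Ω))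
      atTop (nhds 0) ∧
    Tendsto (fun T => variance (gbmGammaEq2 σ a b c U U T t) (ℙ : Measure Ω))
      atTop (nhds 0) := by
  exact ⟨main_lemma σ hσ a b c ha hac hb W U h.bmX h.bmY t ht,
    main_lemma σ hσ a b c ha hac hb W W h.bmX h.bmX t ht,
    main_lemma σ hσ a b c ha hac hb U U h.bmY h.bmY t ht⟩
end
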